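/- arXiv:1909.02691 — 4 statements merged into one kernel-verified Lean document; each statement's English description precedes it below -/
import Mathlib

section
/- Let H be a graph with at least one edge and no isolated vertices, let G be a finite graph, and let K be a k-element subset of the vertex set of G. Let I_K be any size-maximal collection of pairwise edge-disjoint copies of H from H*_K; let T_K be any size-maximal collection of pairwise edge-disjoint copies of H from H_K \ H*_K; and let P_K be any size-maximal collection of pairwise edge-disjoint unions H_1 ∪ H_2 of distinct copies H_1, H_2 ∈ H*_K satisfying |E(H_1) ∩ E(H_2)| ≥ 1 and V(H_1) ∩ K ≠ V(H_2) ∩ K. Then Y_K ≤ |I_K| + 2·e_H²·(|T_K| + |P_K|)·Δ_H. -/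
open Finset Filter
open scoped Classical

noncomputable section

/-- The potential edges (unordered pairs of distinct vertices) of the complete graph on `Fin n`. -/
def allEdges (n : ℕ) : Finset (Sym2 (Fin n)) :=
  Finset.univ.filter fun e => ¬ e.IsDiag

/-- The probability that the binomial random graph `G_{n,p}` (a uniformly random subset of
`allEdges n`, each potential edge present independently with probability `p`) lies in `A`. -/
def gnpProb (n : ℕ) (p : ℝ) (A : Set (Finset (Sym2 (Fin n)))) : ℝ :=
  ∑ G ∈ (allEdges n).powerset,
    if G ∈ A then p ^ G.card * (1 - p) ^ ((allEdges n).card - G.card) else 0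

/-- `P = (W, S)` is a copy of `H` in the edge set `G`: `W` and `S` are the images of the
vertices and edges of `H` under an injection whose edge-image lies in `G`. -/
def IsCopyPair {h n : ℕ} (H : SimpleGraph (Fin h)) (G : Finset (Sym2 (Fin n)))
    (P : Finset (Fin n) × Finset (Sym2 (Fin n))) : Prop :=
  ∃ φ : Fin h ↪ Fin n,
    P.1 = Finset.univ.image ⇑φ ∧
    (↑P.2 : Set (Sym2 (Fin n))) = Sym2.map ⇑φ '' H.edgeSet ∧
    P.2 ⊆ G

/-- The collection of all copies of `H` in the edge set `G`. -/
def copies {h n : ℕ} (H : SimpleGraph (Fin h)) (G : Finset (Sym2 (Fin n))) :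
    Finset (Finset (Fin n) × Finset (Sym2 (Fin n))) :=
  Finset.univ.filter (IsCopyPair H G)

/-- `X_K`: the number of edges of `G` with both endpoints in `K`. -/
def XK {n : ℕ} (G : Finset (Sym2 (Fin n))) (K : Finset (Fin n)) : ℕ :=
  (G.filter fun e => ∀ v ∈ e, v ∈ K).card

/-- `Y_K`: the number of edges of `G` with both endpoints in `K` that lie in some copy
of `H` in `G`. -/
def YK {h n : ℕ} (H : SimpleGraph (Fin h)) (G : Finset (Sym2 (Fin n)))
    (K : Finset (Fin n)) : ℕ :=
  (G.filter fun e => (∀ v ∈ e, v ∈ K) ∧ ∃ P ∈ copies H G, e ∈ P.2).card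

/-- `𝓗_K`: the copies of `H` in `G` having at least one edge with both endpoints in `K`. -/
def HKcol {h n : ℕ} (H : SimpleGraph (Fin h)) (G : Finset (Sym2 (Fin n)))
    (K : Finset (Fin n)) : Finset (Finset (Fin n) × Finset (Sym2 (Fin n))) :=
  (copies H G).filter fun P => ∃ e ∈ P.2, ∀ v ∈ e, v ∈ K

/-- `𝓗*_K`: the copies in `𝓗_K` sharing exactly two vertices with `K`. -/
def HstarK {h n : ℕ} (H : SimpleGraph (Fin h)) (G : Finset (Sym2 (Fin n)))
    (K : Finset (Fin n)) : Finset (Finset (Fin n) × Finset (Sym2 (Fin n))) :=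
  (HKcol H G K).filter fun P => (P.1 ∩ K).card = 2

/-- `Δ_H`: the maximum over all potential edges `f` of the number of copies of `H` in `G`
containing `f`. -/
def deltaH {h n : ℕ} (H : SimpleGraph (Fin h)) (G : Finset (Sym2 (Fin n))) : ℕ :=
  (allEdges n).sup fun f => ((copies H G).filter fun P => f ∈ P.2).card


/-- Two non-diagonal `Sym2` elements supported in the same 2-element set are equal. -/
lemma sym2_eq_of_subset_pair {α : Type*} [DecidableEq α] {s : Finset α} (hs : s.card = 2)
    {e e' : Sym2 α} (he : ¬e.IsDiag) (he' : ¬e'.IsDiag)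
    (h1 : ∀ v ∈ e, v ∈ s) (h2 : ∀ v ∈ e', v ∈ s) : e = e' := by
  obtain ⟨a, b, hab, rfl⟩ := Finset.card_eq_two.mp hs
  induction e with
  | _ x y =>
    induction e' with
    | _ z w =>
      simp only [Sym2.mem_iff, forall_eq_or_imp, forall_eq, Finset.mem_insert,
        Finset.mem_singleton] at h1 h2
      rw [Sym2.mk_isDiag_iff] at he he'
      obtain ⟨h1a, h1b⟩ := h1
      obtain ⟨h2a, h2b⟩ := h2
      rcases h1a with rfl|rfl <;> rcases h1b with rfl|rfl <;> rcases h2a with rfl|rfl <;>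
        rcases h2b with rfl|rfl <;> simp_all [Sym2.eq_swap]

/-- A maximal pairwise-edge-disjoint subfamily meets every member of the family. -/
lemma exists_meet {α β : Type*} [DecidableEq α] [DecidableEq β] (pred : α → Prop) (C : Finset α)
    (ed : α → Finset β) (hCp : ∀ P ∈ C, pred P)
    (hCd : ∀ P ∈ C, ∀ Q ∈ C, P ≠ Q → Disjoint (ed P) (ed Q))
    (hmax : ∀ J : Finset α, (∀ P ∈ J, pred P) →
      (∀ P ∈ J, ∀ Q ∈ J, P ≠ Q → Disjoint (ed P) (ed Q)) → J.card ≤ C.card)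
    (x : α) (hx : pred x) (hne : (ed x).Nonempty) :
    ∃ y ∈ C, ((ed x) ∩ (ed y)).Nonempty := by
  by_cases hxC : x ∈ C
  · exact ⟨x, hxC, by simpa using hne⟩
  · by_contra hcon
    push_neg at hcon
    have hdis : ∀ y ∈ C, Disjoint (ed x) (ed y) := by
      intro y hy
      rw [Finset.disjoint_iff_inter_eq_empty]
      exact hcon y hy
    have hJ := hmax (insert x C)
      (by intro P hP; rcases Finset.mem_insert.mp hP with rfl|hP
          exacts [hx, hCp P hP])
      (by intro P hP Q hQ hne'
          rcases Finset.mem_insert.mp hP with hPx | hP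
          · rcases Finset.mem_insert.mp hQ with hQx | hQ
            · exact absurd (hPx.trans hQx.symm) hne'
            · exact hPx ▸ hdis Q hQ
          · rcases Finset.mem_insert.mp hQ with hQx | hQ
            · exact hQx ▸ (hdis P hP).symm
            · exact hCd P hP Q hQ hne')
    rw [Finset.card_insert_of_notMem hxC] at hJ
    omega

lemma mem_copies_iff {h n : ℕ} (H : SimpleGraph (Fin h)) (G : Finset (Sym2 (Fin n)))
    (P : Finset (Fin n) × Finset (Sym2 (Fin n))) : P ∈ copies H G ↔ IsCopyPair H G P := by
  simp [copies]

lemma copy_edges_subset {h n : ℕ} {H : SimpleGraph (Fin h)} {G : Finset (Sym2 (Fin n))}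
    {P} (hP : P ∈ copies H G) : P.2 ⊆ G := by
  obtain ⟨φ, -, -, hsub⟩ := (mem_copies_iff H G P).mp hP
  exact hsub

lemma copy_card_edges {h n : ℕ} {H : SimpleGraph (Fin h)} {G : Finset (Sym2 (Fin n))}
    {P} (hP : P ∈ copies H G) : P.2.card = H.edgeSet.ncard := by
  obtain ⟨φ, -, h2, -⟩ := (mem_copies_iff H G P).mp hP
  have h3 := congrArg Set.ncard h2
  rwa [Set.ncard_coe_finset, Set.ncard_image_of_injective _ (Sym2.map.injective φ.injective)] at h3

lemma copy_mem_verts {h n : ℕ} {H : SimpleGraph (Fin h)} {G : Finset (Sym2 (Fin n))}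
    {P} (hP : P ∈ copies H G) {f} (hf : f ∈ P.2) {v} (hv : v ∈ f) : v ∈ P.1 := by
  obtain ⟨φ, h1, h2, -⟩ := (mem_copies_iff H G P).mp hP
  have hf' : f ∈ (↑P.2 : Set (Sym2 (Fin n))) := hf
  rw [h2] at hf'
  obtain ⟨e₀, he₀, rfl⟩ := hf'
  rw [Sym2.mem_map] at hv
  obtain ⟨w, hw, rfl⟩ := hv
  rw [h1]
  exact Finset.mem_image.mpr ⟨w, Finset.mem_univ w, rfl⟩

lemma filter_copies_card_le_deltaH {h n : ℕ} (H : SimpleGraph (Fin h))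
    (G : Finset (Sym2 (Fin n))) (hG : ∀ e ∈ G, ¬ e.IsDiag) {g} (hg : g ∈ G) :
    ((copies H G).filter (fun P => g ∈ P.2)).card ≤ deltaH H G := by
  refine Finset.le_sup (f := fun f => ((copies H G).filter (fun P => f ∈ P.2)).card) ?_
  simp only [allEdges, Finset.mem_filter, Finset.mem_univ, true_and]
  exact hG g hg

/-- Claim 2: the deterministic bound
`Y_K ≤ |I_K| + 2 e_H² (|T_K| + |P_K|) Δ_H`. -/
theorem claim_two {h n : ℕ} (H : SimpleGraph (Fin h))
    (hHe : H.edgeSet.Nonempty) (hiso : ∀ v : Fin h, ∃ w, H.Adj v w)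
    (G : Finset (Sym2 (Fin n))) (hG : ∀ e ∈ G, ¬ e.IsDiag)
    (k : ℕ) (K : Finset (Fin n)) (hK : K.card = k)
    (IK TK : Finset (Finset (Fin n) × Finset (Sym2 (Fin n))))
    (hIK₁ : IK ⊆ HstarK H G K)
    (hIK₂ : ∀ P ∈ IK, ∀ Q ∈ IK, P ≠ Q → Disjoint P.2 Q.2)
    (hIK₃ : ∀ J ⊆ HstarK H G K,
      (∀ P ∈ J, ∀ Q ∈ J, P ≠ Q → Disjoint P.2 Q.2) → J.card ≤ IK.card)
    (hTK₁ : TK ⊆ HKcol H G K \ HstarK H G K)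
    (hTK₂ : ∀ P ∈ TK, ∀ Q ∈ TK, P ≠ Q → Disjoint P.2 Q.2)
    (hTK₃ : ∀ J ⊆ HKcol H G K \ HstarK H G K,
      (∀ P ∈ J, ∀ Q ∈ J, P ≠ Q → Disjoint P.2 Q.2) → J.card ≤ TK.card)
    (PK : Finset ((Finset (Fin n) × Finset (Sym2 (Fin n))) × (Finset (Fin n) × Finset (Sym2 (Fin n)))))
    (hPK₁ : ∀ q ∈ PK, q.1 ∈ HstarK H G K ∧ q.2 ∈ HstarK H G K ∧ q.1 ≠ q.2 ∧
      (q.1.2 ∩ q.2.2).Nonempty ∧ q.1.1 ∩ K ≠ q.2.1 ∩ K)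
    (hPK₂ : ∀ q ∈ PK, ∀ q' ∈ PK, q ≠ q' →
      Disjoint (q.1.2 ∪ q.2.2) (q'.1.2 ∪ q'.2.2))
    (hPK₃ : ∀ Q : Finset ((Finset (Fin n) × Finset (Sym2 (Fin n))) × (Finset (Fin n) × Finset (Sym2 (Fin n)))),
      (∀ q ∈ Q, q.1 ∈ HstarK H G K ∧ q.2 ∈ HstarK H G K ∧ q.1 ≠ q.2 ∧
        (q.1.2 ∩ q.2.2).Nonempty ∧ q.1.1 ∩ K ≠ q.2.1 ∩ K) →
      (∀ q ∈ Q, ∀ q' ∈ Q, q ≠ q' →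
        Disjoint (q.1.2 ∪ q.2.2) (q'.1.2 ∪ q'.2.2)) → Q.card ≤ PK.card) :
    YK H G K ≤ IK.card + 2 * H.edgeSet.ncard ^ 2 * (TK.card + PK.card) * deltaH H G := by
  set Δ := deltaH H G with hΔdef
  set eH := H.edgeSet.ncard with heHdef
  have heH1 : 1 ≤ eH := (Set.ncard_pos (Set.toFinite _)).mpr hHe
  have hstar_sub : HstarK H G K ⊆ copies H G := fun P hP =>
    (Finset.mem_filter.mp (Finset.mem_filter.mp hP).1).1
  have hcol_sub : HKcol H G K ⊆ copies H G := fun P hP => (Finset.mem_filter.mp hP).1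
  have hstar_card : ∀ P ∈ HstarK H G K, (P.1 ∩ K).card = 2 := fun P hP =>
    (Finset.mem_filter.mp hP).2
  have hIKstar : ∀ I ∈ IK, I ∈ HstarK H G K := fun I hI => hIK₁ hI
  have hIKcopy : ∀ I ∈ IK, I ∈ copies H G := fun I hI => hstar_sub (hIKstar I hI)
  have hTKcopy : ∀ T ∈ TK, T ∈ copies H G := fun T hT =>
    hcol_sub (Finset.mem_sdiff.mp (hTK₁ hT)).1
  -- uniqueness of the K-edge of a copy in 𝓗*_K
  have huniq : ∀ P ∈ HstarK H G K, ∀ e ∈ P.2, (∀ v ∈ e, v ∈ K) →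
      ∀ e' ∈ P.2, (∀ v ∈ e', v ∈ K) → e = e' := by
    intro P hP e he heK e' he' heK'
    have hPc : P ∈ copies H G := hstar_sub hP
    refine sym2_eq_of_subset_pair (hstar_card P hP) (hG e (copy_edges_subset hPc he))
      (hG e' (copy_edges_subset hPc he')) ?_ ?_
    · intro v hv; exact Finset.mem_inter.mpr ⟨copy_mem_verts hPc he hv, heK v hv⟩
    · intro v hv; exact Finset.mem_inter.mpr ⟨copy_mem_verts hPc he' hv, heK' v hv⟩
  set S := G.filter (fun e => (∀ v ∈ e, v ∈ K) ∧ ∃ P ∈ copies H G, e ∈ P.2) with hSdef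
  have hYK : YK H G K = S.card := rfl
  set UT := TK.biUnion (fun T => T.2) with hUTdef
  set UP := PK.biUnion (fun q => q.1.2 ∪ q.2.2) with hUPdef
  set W := UP.biUnion
    (fun f => insert f ((IK.filter (fun I => f ∈ I.2)).biUnion (fun I => I.2))) with hWdef
  have hUTG : ∀ g ∈ UT, g ∈ G := by
    intro g hg
    obtain ⟨T, hT, hgT⟩ := Finset.mem_biUnion.mp hg
    exact copy_edges_subset (hTKcopy T hT) hgT
  have hUPG : ∀ g ∈ UP, g ∈ G := by
    intro g hg
    obtain ⟨q, hq, hgq⟩ := Finset.mem_biUnion.mp hg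
    obtain ⟨h1, h2, -⟩ := hPK₁ q hq
    rcases Finset.mem_union.mp hgq with hg1 | hg2
    · exact copy_edges_subset (hstar_sub h1) hg1
    · exact copy_edges_subset (hstar_sub h2) hg2
  have hWG : ∀ g ∈ W, g ∈ G := by
    intro g hg
    obtain ⟨f, hf, hgf⟩ := Finset.mem_biUnion.mp hg
    rcases Finset.mem_insert.mp hgf with rfl | hgf
    · exact hUPG g hf
    · obtain ⟨I, hI, hgI⟩ := Finset.mem_biUnion.mp hgf
      exact copy_edges_subset (hIKcopy I (Finset.mem_filter.mp hI).1) hgI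
  have hUTcard : UT.card ≤ TK.card * eH := by
    calc UT.card ≤ ∑ T ∈ TK, T.2.card := Finset.card_biUnion_le
      _ = ∑ _T ∈ TK, eH := Finset.sum_congr rfl (fun T hT => copy_card_edges (hTKcopy T hT))
      _ = TK.card * eH := by rw [Finset.sum_const, smul_eq_mul]
  have hUPcard : UP.card ≤ PK.card * (2 * eH) := by
    calc UP.card ≤ ∑ q ∈ PK, (q.1.2 ∪ q.2.2).card := Finset.card_biUnion_le
      _ ≤ ∑ _q ∈ PK, 2 * eH := Finset.sum_le_sum (fun q hq => by
          obtain ⟨h1, h2, -⟩ := hPK₁ q hq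
          calc (q.1.2 ∪ q.2.2).card ≤ q.1.2.card + q.2.2.card := Finset.card_union_le _ _
            _ = 2 * eH := by
                rw [copy_card_edges (hstar_sub h1), copy_card_edges (hstar_sub h2)]
                ring)
      _ = PK.card * (2 * eH) := by rw [Finset.sum_const, smul_eq_mul]
  have hWf : ∀ f, (insert f ((IK.filter (fun I => f ∈ I.2)).biUnion (fun I => I.2))).card ≤ eH := by
    intro f
    by_cases hf : ∃ I ∈ IK, f ∈ I.2
    · obtain ⟨I, hI, hfI⟩ := hf
      have hsub : insert f ((IK.filter (fun I => f ∈ I.2)).biUnion (fun I => I.2)) ⊆ I.2 := by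
        intro x hx
        rcases Finset.mem_insert.mp hx with rfl | hx
        · exact hfI
        · obtain ⟨I', hI', hxI'⟩ := Finset.mem_biUnion.mp hx
          have hI'm := Finset.mem_filter.mp hI'
          have hII : I' = I := by
            by_contra hne
            exact Finset.disjoint_left.mp (hIK₂ I' hI'm.1 I hI hne) hI'm.2 hfI
          exact hII ▸ hxI'
      calc _ ≤ I.2.card := Finset.card_le_card hsub
        _ = eH := copy_card_edges (hIKcopy I hI)
    · push_neg at hf
      have hemp : IK.filter (fun I => f ∈ I.2) = ∅ :=
        Finset.filter_eq_empty_iff.mpr (fun {I} hI => hf I hI)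
      rw [hemp]
      simpa using heH1
  have hWcard : W.card ≤ PK.card * (2 * eH) * eH := by
    calc W.card ≤ ∑ f ∈ UP,
          (insert f ((IK.filter (fun I => f ∈ I.2)).biUnion (fun I => I.2))).card :=
        Finset.card_biUnion_le
      _ ≤ ∑ _f ∈ UP, eH := Finset.sum_le_sum (fun f _ => hWf f)
      _ = UP.card * eH := by rw [Finset.sum_const, smul_eq_mul]
      _ ≤ PK.card * (2 * eH) * eH := Nat.mul_le_mul_right _ hUPcard
  -- the splitting of S
  set SA := S.filter (fun e => ∃ P ∈ HKcol H G K \ HstarK H G K, e ∈ P.2) with hSAdef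
  set SB := S \ SA with hSBdef
  set SB0 := SB.filter (fun e => ∃ I ∈ IK, e ∈ I.2) with hSB0def
  set SB1 := SB \ SB0 with hSB1def
  have hsplit : S.card ≤ SA.card + SB0.card + SB1.card := by
    have h1 : S ⊆ SA ∪ SB := by
      intro e he
      by_cases h : e ∈ SA
      · exact Finset.mem_union_left _ h
      · exact Finset.mem_union_right _ (Finset.mem_sdiff.mpr ⟨he, h⟩)
    have h2 : SB ⊆ SB0 ∪ SB1 := by
      intro e he
      by_cases h : e ∈ SB0
      · exact Finset.mem_union_left _ h
      · exact Finset.mem_union_right _ (Finset.mem_sdiff.mpr ⟨he, h⟩)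
    have c1 : S.card ≤ SA.card + SB.card :=
      le_trans (Finset.card_le_card h1) (Finset.card_union_le _ _)
    have c2 : SB.card ≤ SB0.card + SB1.card :=
      le_trans (Finset.card_le_card h2) (Finset.card_union_le _ _)
    omega
  -- Bound on SB0
  have hB0 : SB0.card ≤ IK.card := by
    have hmem : ∀ e ∈ SB0, ∃ I ∈ IK, e ∈ I.2 := fun e he => (Finset.mem_filter.mp he).2
    have hKprop : ∀ e ∈ SB0, ∀ v ∈ e, v ∈ K := by
      intro e he
      have heS : e ∈ S := (Finset.mem_sdiff.mp (Finset.mem_filter.mp he).1).1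
      exact (Finset.mem_filter.mp heS).2.1
    classical
    set fB0 : Sym2 (Fin n) → (Finset (Fin n) × Finset (Sym2 (Fin n))) :=
      fun e => if h : ∃ I ∈ IK, e ∈ I.2 then h.choose else (∅, ∅) with hfB0
    apply Finset.card_le_card_of_injOn fB0
    · intro e he
      have h : ∃ I ∈ IK, e ∈ I.2 := hmem e he
      simp only [hfB0, dif_pos h]
      exact h.choose_spec.1
    · intro e₁ h₁ e₂ h₂ heq
      have h₁' : e₁ ∈ SB0 := h₁
      have h₂' : e₂ ∈ SB0 := h₂
      have hx₁ : ∃ I ∈ IK, e₁ ∈ I.2 := hmem e₁ h₁'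
      have hx₂ : ∃ I ∈ IK, e₂ ∈ I.2 := hmem e₂ h₂'
      simp only [hfB0, dif_pos hx₁, dif_pos hx₂] at heq
      obtain ⟨hI₁, he₁⟩ := hx₁.choose_spec
      obtain ⟨hI₂, he₂⟩ := hx₂.choose_spec
      exact huniq hx₁.choose (hIKstar _ hI₁) e₁ he₁ (hKprop e₁ h₁') e₂
        (by rw [heq]; exact he₂) (hKprop e₂ h₂')
  -- Bound on SA
  set TT := UT.biUnion (fun g => ((copies H G).filter (fun P => g ∈ P.2)).biUnion
      (fun P => P.2.image (fun e => (g, P, e)))) with hTTdef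
  have hTTcard : TT.card ≤ TK.card * eH * (Δ * eH) := by
    calc TT.card ≤ ∑ g ∈ UT, (((copies H G).filter (fun P => g ∈ P.2)).biUnion
          (fun P => P.2.image (fun e => (g, P, e)))).card := Finset.card_biUnion_le
      _ ≤ ∑ _g ∈ UT, Δ * eH := Finset.sum_le_sum (fun g hg => by
          calc (((copies H G).filter (fun P => g ∈ P.2)).biUnion
                (fun P => P.2.image (fun e => (g, P, e)))).card
              ≤ ∑ P ∈ (copies H G).filter (fun P => g ∈ P.2),
                  (P.2.image (fun e => (g, P, e))).card := Finset.card_biUnion_le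
            _ ≤ ∑ P ∈ (copies H G).filter (fun P => g ∈ P.2), eH :=
                Finset.sum_le_sum (fun P hP => by
                  have hPc : P ∈ copies H G := (Finset.mem_filter.mp hP).1
                  exact le_trans Finset.card_image_le (le_of_eq (copy_card_edges hPc)))
            _ = ((copies H G).filter (fun P => g ∈ P.2)).card * eH := by
                rw [Finset.sum_const, smul_eq_mul]
            _ ≤ Δ * eH :=
                Nat.mul_le_mul_right _ (filter_copies_card_le_deltaH H G hG (hUTG g hg)))
      _ = UT.card * (Δ * eH) := by rw [Finset.sum_const, smul_eq_mul]
      _ ≤ TK.card * eH * (Δ * eH) := Nat.mul_le_mul_right _ hUTcard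
  have hA : SA.card ≤ TT.card := by
    have hQA : ∀ e ∈ SA, ∃ gp : Sym2 (Fin n) × (Finset (Fin n) × Finset (Sym2 (Fin n))),
        gp.1 ∈ UT ∧ gp.2 ∈ copies H G ∧ gp.1 ∈ gp.2.2 ∧ e ∈ gp.2.2 := by
      intro e he
      obtain ⟨P, hP, heP⟩ := (Finset.mem_filter.mp he).2
      have hPc : P ∈ copies H G := hcol_sub (Finset.mem_sdiff.mp hP).1
      obtain ⟨T, hT, hmeet⟩ := exists_meet (fun Q => Q ∈ HKcol H G K \ HstarK H G K) TK
        (fun Q => Q.2) (fun T hT => hTK₁ hT) hTK₂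
        (fun J hJp hJd => hTK₃ J (fun x hx => hJp x hx) hJd) P hP ⟨e, heP⟩
      obtain ⟨g, hg⟩ := hmeet
      have hgm := Finset.mem_inter.mp hg
      exact ⟨(g, P), Finset.mem_biUnion.mpr ⟨T, hT, hgm.2⟩, hPc, hgm.1, heP⟩
    classical
    set fA : Sym2 (Fin n) → Sym2 (Fin n) × (Finset (Fin n) × Finset (Sym2 (Fin n))) × Sym2 (Fin n) :=
      fun e => if h : ∃ gp : Sym2 (Fin n) × (Finset (Fin n) × Finset (Sym2 (Fin n))),
          gp.1 ∈ UT ∧ gp.2 ∈ copies H G ∧ gp.1 ∈ gp.2.2 ∧ e ∈ gp.2.2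
        then (h.choose.1, h.choose.2, e) else (e, (∅, ∅), e) with hfA
    have hthird : ∀ e, (fA e).2.2 = e := by
      intro e
      simp only [hfA]
      split <;> rfl
    apply Finset.card_le_card_of_injOn fA
    · intro e he
      have h := hQA e he
      simp only [hfA, dif_pos h]
      obtain ⟨h1, h2, h3, h4⟩ := h.choose_spec
      exact Finset.mem_biUnion.mpr ⟨h.choose.1, h1, Finset.mem_biUnion.mpr ⟨h.choose.2,
        Finset.mem_filter.mpr ⟨h2, h3⟩, Finset.mem_image.mpr ⟨e, h4, rfl⟩⟩⟩
    · intro e₁ _ e₂ _ heq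
      have := congrArg (fun x => x.2.2) heq
      simpa only [hthird] using this
  -- Bound on SB1
  set TP := W.biUnion (fun g => ((copies H G).filter (fun P => g ∈ P.2)).image
      (fun P => (g, P))) with hTPdef
  have hTPcard : TP.card ≤ PK.card * (2 * eH) * eH * Δ := by
    calc TP.card ≤ ∑ g ∈ W, (((copies H G).filter (fun P => g ∈ P.2)).image
          (fun P => (g, P))).card := Finset.card_biUnion_le
      _ ≤ ∑ _g ∈ W, Δ := Finset.sum_le_sum (fun g hg =>
          le_trans Finset.card_image_le (filter_copies_card_le_deltaH H G hG (hWG g hg)))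
      _ = W.card * Δ := by rw [Finset.sum_const, smul_eq_mul]
      _ ≤ PK.card * (2 * eH) * eH * Δ := Nat.mul_le_mul_right _ hWcard
  have hB1 : SB1.card ≤ TP.card := by
    have hQB : ∀ e ∈ SB1, ∃ gp : Sym2 (Fin n) × (Finset (Fin n) × Finset (Sym2 (Fin n))),
        gp.1 ∈ W ∧ gp.2 ∈ copies H G ∧ gp.1 ∈ gp.2.2 ∧ gp.2 ∈ HstarK H G K ∧ e ∈ gp.2.2 := by
      intro e he
      have heSB : e ∈ SB := (Finset.mem_sdiff.mp he).1
      have heS : e ∈ S := (Finset.mem_sdiff.mp heSB).1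
      have heNA : e ∉ SA := (Finset.mem_sdiff.mp heSB).2
      have heN0 : ¬ ∃ I ∈ IK, e ∈ I.2 := fun hx =>
        (Finset.mem_sdiff.mp he).2 (Finset.mem_filter.mpr ⟨heSB, hx⟩)
      obtain ⟨heG, heK, P₀, hP₀c, heP₀⟩ := Finset.mem_filter.mp heS
      have hP₀col : P₀ ∈ HKcol H G K := Finset.mem_filter.mpr ⟨hP₀c, e, heP₀, heK⟩
      have hP₀star : P₀ ∈ HstarK H G K := by
        by_contra hns
        exact heNA (Finset.mem_filter.mpr ⟨heS, P₀, Finset.mem_sdiff.mpr ⟨hP₀col, hns⟩, heP₀⟩)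
      obtain ⟨I, hI, hmeet⟩ := exists_meet (fun Q => Q ∈ HstarK H G K) IK (fun Q => Q.2)
        (fun I hI => hIK₁ hI) hIK₂ (fun J hJp hJd => hIK₃ J (fun x hx => hJp x hx) hJd)
        P₀ hP₀star ⟨e, heP₀⟩
      obtain ⟨f₀, hf₀⟩ := hmeet
      have hf₀m := Finset.mem_inter.mp hf₀
      have hIstar := hIKstar I hI
      have hIc := hIKcopy I hI
      have hVne : P₀.1 ∩ K ≠ I.1 ∩ K := by
        intro hVeq
        obtain ⟨eI, heI, heIK⟩ := (Finset.mem_filter.mp (Finset.mem_filter.mp hIstar).1).2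
        have heeI : e = eI := by
          refine sym2_eq_of_subset_pair (hstar_card I hIstar) (hG e heG)
            (hG eI (copy_edges_subset hIc heI)) ?_ ?_
          · intro v hv
            have hvm : v ∈ P₀.1 ∩ K :=
              Finset.mem_inter.mpr ⟨copy_mem_verts hP₀c heP₀ hv, heK v hv⟩
            rw [hVeq] at hvm
            exact hvm
          · intro v hv
            exact Finset.mem_inter.mpr ⟨copy_mem_verts hIc heI hv, heIK v hv⟩
        exact heN0 ⟨I, hI, heeI ▸ heI⟩
      have hPne : P₀ ≠ I := fun hPI => hVne (by rw [hPI])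
      obtain ⟨q', hq', hmeet'⟩ := exists_meet
        (fun q => q.1 ∈ HstarK H G K ∧ q.2 ∈ HstarK H G K ∧ q.1 ≠ q.2 ∧
          (q.1.2 ∩ q.2.2).Nonempty ∧ q.1.1 ∩ K ≠ q.2.1 ∩ K)
        PK (fun q => q.1.2 ∪ q.2.2) hPK₁ hPK₂ hPK₃
        (P₀, I) ⟨hP₀star, hIstar, hPne, ⟨f₀, hf₀⟩, hVne⟩
        ⟨e, Finset.mem_union_left _ heP₀⟩
      obtain ⟨f, hf⟩ := hmeet'
      have hfm := Finset.mem_inter.mp hf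
      have hfUP : f ∈ UP := Finset.mem_biUnion.mpr ⟨q', hq', hfm.2⟩
      rcases Finset.mem_union.mp hfm.1 with hfP | hfI
      · exact ⟨(f, P₀), Finset.mem_biUnion.mpr ⟨f, hfUP, Finset.mem_insert_self _ _⟩,
          hP₀c, hfP, hP₀star, heP₀⟩
      · refine ⟨(f₀, P₀), ?_, hP₀c, hf₀m.1, hP₀star, heP₀⟩
        refine Finset.mem_biUnion.mpr ⟨f, hfUP, Finset.mem_insert.mpr (Or.inr ?_)⟩
        exact Finset.mem_biUnion.mpr ⟨I, Finset.mem_filter.mpr ⟨hI, hfI⟩, hf₀m.2⟩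
    have hKprop : ∀ e ∈ SB1, ∀ v ∈ e, v ∈ K := by
      intro e he
      have heS : e ∈ S := (Finset.mem_sdiff.mp (Finset.mem_sdiff.mp he).1).1
      exact (Finset.mem_filter.mp heS).2.1
    classical
    set fB : Sym2 (Fin n) → Sym2 (Fin n) × (Finset (Fin n) × Finset (Sym2 (Fin n))) :=
      fun e => if h : ∃ gp : Sym2 (Fin n) × (Finset (Fin n) × Finset (Sym2 (Fin n))),
          gp.1 ∈ W ∧ gp.2 ∈ copies H G ∧ gp.1 ∈ gp.2.2 ∧ gp.2 ∈ HstarK H G K ∧ e ∈ gp.2.2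
        then (h.choose.1, h.choose.2) else (e, (∅, ∅)) with hfB
    apply Finset.card_le_card_of_injOn fB
    · intro e he
      have h := hQB e he
      simp only [hfB, dif_pos h]
      obtain ⟨h1, h2, h3, h4, h5⟩ := h.choose_spec
      exact Finset.mem_biUnion.mpr ⟨h.choose.1, h1, Finset.mem_image.mpr ⟨h.choose.2,
        Finset.mem_filter.mpr ⟨h2, h3⟩, rfl⟩⟩
    · intro e₁ h₁ e₂ h₂ heq
      have h₁' : e₁ ∈ SB1 := h₁
      have h₂' : e₂ ∈ SB1 := h₂
      have hx₁ := hQB e₁ h₁'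
      have hx₂ := hQB e₂ h₂'
      simp only [hfB, dif_pos hx₁, dif_pos hx₂] at heq
      obtain ⟨-, -, -, hstar₁, hin₁⟩ := hx₁.choose_spec
      obtain ⟨-, -, -, hstar₂, hin₂⟩ := hx₂.choose_spec
      have hPP : hx₁.choose.2 = hx₂.choose.2 := congrArg Prod.snd heq
      exact huniq hx₁.choose.2 hstar₁ e₁ hin₁ (hKprop e₁ h₁') e₂
        (by rw [hPP]; exact hin₂) (hKprop e₂ h₂')
  -- putting everything together
  rw [hYK]
  have hAfin : SA.card ≤ TK.card * eH * (Δ * eH) := le_trans hA hTTcard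
  have hBfin : SB1.card ≤ PK.card * (2 * eH) * eH * Δ := le_trans hB1 hTPcard
  have hfinal : TK.card * eH * (Δ * eH) + PK.card * (2 * eH) * eH * Δ
      ≤ 2 * eH ^ 2 * (TK.card + PK.card) * Δ := by
    have h1 : TK.card * eH * (Δ * eH) ≤ 2 * (TK.card * eH * (Δ * eH)) := by linarith
    calc TK.card * eH * (Δ * eH) + PK.card * (2 * eH) * eH * Δ
        ≤ 2 * (TK.card * eH * (Δ * eH)) + PK.card * (2 * eH) * eH * Δ :=
          Nat.add_le_add_right h1 _
      _ = 2 * eH ^ 2 * (TK.card + PK.card) * Δ := by ring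
  omega
end
end

section
/- Let n ∈ ℕ, p ∈ [0,1], and let S be a collection of edge-subsets of the complete graph K_n. Define Z as the largest number of pairwise disjoint edge-sets from S all of whose edges are present in G_{n,p}, and set μ := Σ_{β ∈ S} p^{|β|}. Then for every x > μ one has Pr(Z ≥ x) ≤ (eμ/x)^x. -/
open Finset Filter
open scoped Classical

noncomputable section

/-- The largest number of pairwise disjoint edge sets from `S` that are all present in `G`. -/
def maxDisjointPresent {n : ℕ} (S : Finset (Finset (Sym2 (Fin n))))
    (G : Finset (Sym2 (Fin n))) : ℕ :=
  (S.powerset.filter fun T =>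
      (∀ β ∈ T, β ⊆ G) ∧ ∀ β ∈ T, ∀ γ ∈ T, β ≠ γ → Disjoint β γ).sup Finset.card

/-- Binomial identity: the total probability mass is `1`. -/
lemma sum_powerset_weights {α : Type*} [DecidableEq α] (U : Finset α) (p : ℝ) :
    ∑ H ∈ U.powerset, p ^ H.card * (1 - p) ^ (U.card - H.card) = 1 := by
  have h := Finset.prod_add (fun _ : α => p) (fun _ => (1 - p)) U
  simp only [Finset.prod_const] at h
  have h1 : ((p + (1 - p)) : ℝ) = 1 := by ring
  rw [h1, one_pow] at h
  rw [show ∑ H ∈ U.powerset, p ^ H.card * (1 - p) ^ (U.card - H.card)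
      = ∑ H ∈ U.powerset, p ^ H.card * (1 - p) ^ ((U \ H).card) from
    Finset.sum_congr rfl fun t ht => by
      rw [Finset.card_sdiff_of_subset (Finset.mem_powerset.mp ht)]]
  exact h.symm

/-- The probability that a fixed set of potential edges is entirely present is `p ^ |E|`. -/
lemma gnpProb_superset (n : ℕ) (p : ℝ) (E : Finset (Sym2 (Fin n))) (hE : E ⊆ allEdges n) :
    gnpProb n p {G | E ⊆ G} = p ^ E.card := by
  have h0 : gnpProb n p {G | E ⊆ G}
      = ∑ G ∈ (allEdges n).powerset.filter (fun G => E ⊆ G),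
          p ^ G.card * (1 - p) ^ ((allEdges n).card - G.card) := by
    rw [gnpProb, Finset.sum_filter]
    refine Finset.sum_congr rfl fun G _ => ?_
    by_cases hG : E ⊆ G <;> simp [hG]
  rw [h0]
  have key : ∑ G ∈ (allEdges n).powerset.filter (fun G => E ⊆ G),
      p ^ G.card * (1 - p) ^ ((allEdges n).card - G.card)
      = ∑ H ∈ (allEdges n \ E).powerset,
        p ^ (H.card + E.card) * (1 - p) ^ ((allEdges n \ E).card - H.card) := by
    refine Finset.sum_bij' (fun G _ => G \ E) (fun H _ => H ∪ E) ?_ ?_ ?_ ?_ ?_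
    · intro G hG
      rw [Finset.mem_filter, Finset.mem_powerset] at hG
      exact Finset.mem_powerset.mpr (Finset.sdiff_subset_sdiff hG.1 le_rfl)
    · intro H hH
      rw [Finset.mem_powerset] at hH
      rw [Finset.mem_filter, Finset.mem_powerset]
      exact ⟨Finset.union_subset (hH.trans Finset.sdiff_subset) hE, Finset.subset_union_right⟩
    · intro G hG
      rw [Finset.mem_filter] at hG
      show G \ E ∪ E = G
      exact Finset.sdiff_union_of_subset hG.2
    · intro H hH
      rw [Finset.mem_powerset] at hH
      have hd : Disjoint H E := (Finset.subset_sdiff.mp hH).2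
      show (H ∪ E) \ E = H
      rw [Finset.union_sdiff_right, Finset.sdiff_eq_self_of_disjoint hd]
    · intro G hG
      rw [Finset.mem_filter] at hG
      have h1 : (G \ E).card + E.card = G.card := by
        rw [Finset.card_sdiff_of_subset hG.2]
        exact Nat.sub_add_cancel (Finset.card_le_card hG.2)
      have h2 : (allEdges n \ E).card - (G \ E).card = (allEdges n).card - G.card := by
        rw [Finset.card_sdiff_of_subset hE, Finset.card_sdiff_of_subset hG.2]
        omega
      rw [h1, h2]
  rw [key]
  have : ∀ H ∈ (allEdges n \ E).powerset,
      p ^ (H.card + E.card) * (1 - p) ^ ((allEdges n \ E).card - H.card)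
      = p ^ E.card * (p ^ H.card * (1 - p) ^ ((allEdges n \ E).card - H.card)) := by
    intro H _
    rw [pow_add]; ring
  rw [Finset.sum_congr rfl this, ← Finset.mul_sum, sum_powerset_weights, mul_one]

/-- Union bound for `gnpProb`. -/
lemma gnpProb_union_bound {ι : Type*} (n : ℕ) (p : ℝ) (hp0 : 0 ≤ p) (hp1 : p ≤ 1)
    (A : Set (Finset (Sym2 (Fin n)))) (F : Finset ι) (B : ι → Set (Finset (Sym2 (Fin n))))
    (hA : ∀ G ∈ (allEdges n).powerset, G ∈ A → ∃ i ∈ F, G ∈ B i) :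
    gnpProb n p A ≤ ∑ i ∈ F, gnpProb n p (B i) := by
  have hw : ∀ G : Finset (Sym2 (Fin n)),
      0 ≤ p ^ G.card * (1 - p) ^ ((allEdges n).card - G.card) := fun G =>
    mul_nonneg (pow_nonneg hp0 _) (pow_nonneg (by linarith) _)
  calc gnpProb n p A
      ≤ ∑ G ∈ (allEdges n).powerset, ∑ i ∈ F,
          (if G ∈ B i then p ^ G.card * (1 - p) ^ ((allEdges n).card - G.card) else 0) := by
        rw [gnpProb]
        refine Finset.sum_le_sum fun G hG => ?_
        by_cases h : G ∈ A
        · simp only [h, if_true]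
          obtain ⟨i, hiF, hGB⟩ := hA G hG h
          have := Finset.single_le_sum
            (f := fun i => if G ∈ B i then
              p ^ G.card * (1 - p) ^ ((allEdges n).card - G.card) else 0)
            (fun j _ => by by_cases hj : G ∈ B j <;> simp [hj, hw G]) hiF
          simpa [hGB] using this
        · simp only [h, if_false]
          exact Finset.sum_nonneg fun j _ => by
            by_cases hj : G ∈ B j <;> simp [hj, hw G]
    _ = ∑ i ∈ F, gnpProb n p (B i) := by
        rw [Finset.sum_comm]; rfl

/-- Elementary symmetric bound: `k! · e_k(w) ≤ (∑ w)^k`. -/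
lemma factorial_mul_esymm_le {ι : Type*} [DecidableEq ι] (w : ι → ℝ) (hw : ∀ i, 0 ≤ w i)
    (S : Finset ι) : ∀ (k : ℕ),
      (k.factorial : ℝ) * ∑ T ∈ S.powersetCard k, ∏ β ∈ T, w β ≤ (∑ β ∈ S, w β) ^ k := by
  induction S using Finset.induction_on with
  | empty =>
    intro k
    cases k with
    | zero => simp
    | succ m => rw [Finset.powersetCard_eq_empty.mpr (by simp)]; simp
  | @insert a S' ha IH =>
    intro k
    cases k with
    | zero => simp
    | succ m =>
      have hA : 0 ≤ ∑ β ∈ S', w β := Finset.sum_nonneg fun i _ => hw i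
      have hb : 0 ≤ w a := hw a
      rw [Finset.powersetCard_succ_insert ha]
      have hdisj : Disjoint (S'.powersetCard (m + 1))
          ((S'.powersetCard m).image (insert a)) := by
        rw [Finset.disjoint_left]
        intro T hT hT'
        obtain ⟨U, hU, rfl⟩ := Finset.mem_image.mp hT'
        have : insert a U ⊆ S' := Finset.mem_powersetCard.mp hT |>.1
        exact ha (this (Finset.mem_insert_self a U))
      rw [Finset.sum_union hdisj]
      have himg : ∑ T ∈ (S'.powersetCard m).image (insert a), ∏ β ∈ T, w β
          = w a * ∑ T ∈ S'.powersetCard m, ∏ β ∈ T, w β := by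
        rw [Finset.sum_image, Finset.mul_sum]
        · refine Finset.sum_congr rfl fun T hT => ?_
          have haT : a ∉ T := fun h =>
            ha ((Finset.mem_powersetCard.mp hT).1 h)
          rw [Finset.prod_insert haT]
        · intro T hT U hU hTU
          have haT : a ∉ T := fun h => ha ((Finset.mem_powersetCard.mp hT).1 h)
          have haU : a ∉ U := fun h => ha ((Finset.mem_powersetCard.mp hU).1 h)
          have := congrArg (fun s => Finset.erase s a) hTU
          simpa [Finset.erase_insert haT, Finset.erase_insert haU] using this
      rw [himg, Finset.sum_insert ha, mul_add]
      set A := ∑ β ∈ S', w β with hAdef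
      have h1 : (↑(m + 1).factorial : ℝ) * ∑ T ∈ S'.powersetCard (m + 1), ∏ β ∈ T, w β
          ≤ A ^ (m + 1) := IH (m + 1)
      have h2 : (↑m.factorial : ℝ) * ∑ T ∈ S'.powersetCard m, ∏ β ∈ T, w β ≤ A ^ m := IH m
      have hfac : ((m + 1).factorial : ℝ) = (m + 1) * m.factorial := by
        rw [Nat.factorial_succ]; push_cast; ring
      have h3 : (↑(m + 1).factorial : ℝ) * (w a * ∑ T ∈ S'.powersetCard m, ∏ β ∈ T, w β)
          ≤ (m + 1) * w a * A ^ m := by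
        rw [hfac]
        have := mul_le_mul_of_nonneg_left h2 (mul_nonneg (by positivity) hb)
        calc ((m : ℝ) + 1) * ↑m.factorial * (w a * ∑ T ∈ S'.powersetCard m, ∏ β ∈ T, w β)
            = ((m + 1) * w a) * (↑m.factorial * ∑ T ∈ S'.powersetCard m, ∏ β ∈ T, w β) := by
              ring
          _ ≤ ((m + 1) * w a) * A ^ m :=
              mul_le_mul_of_nonneg_left h2 (mul_nonneg (by positivity) hb)
          _ = (m + 1) * w a * A ^ m := by ring
      have hbin : A ^ (m + 1) + (m + 1) * w a * A ^ m ≤ (w a + A) ^ (m + 1) := by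
        rw [add_pow]
        have hsub : ({0, 1} : Finset ℕ) ⊆ Finset.range (m + 2) := by
          intro i hi
          simp only [Finset.mem_insert, Finset.mem_singleton] at hi
          rcases hi with rfl | rfl <;> simp [Finset.mem_range]
        have hnn : ∀ i ∈ Finset.range (m + 2),
            0 ≤ w a ^ i * A ^ (m + 1 - i) * ((m + 1).choose i : ℝ) := fun i _ => by
          positivity
        calc A ^ (m + 1) + (m + 1) * w a * A ^ m
            = ∑ i ∈ ({0, 1} : Finset ℕ),
                w a ^ i * A ^ (m + 1 - i) * ((m + 1).choose i : ℝ) := by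
              rw [Finset.sum_pair (by omega : (0:ℕ) ≠ 1)]
              simp
              ring
          _ ≤ ∑ i ∈ Finset.range (m + 2),
                w a ^ i * A ^ (m + 1 - i) * ((m + 1).choose i : ℝ) :=
              Finset.sum_le_sum_of_subset_of_nonneg hsub (fun i hi _ => hnn i hi)
      calc (↑(m + 1).factorial : ℝ) * (∑ T ∈ S'.powersetCard (m + 1), ∏ β ∈ T, w β)
            + (↑(m + 1).factorial : ℝ) * (w a * ∑ T ∈ S'.powersetCard m, ∏ β ∈ T, w β)
          ≤ A ^ (m + 1) + (m + 1) * w a * A ^ m := add_le_add h1 h3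
        _ ≤ (w a + A) ^ (m + 1) := hbin

/-- `t ↦ t (1 + log c − log t)` is antitone on `[c, ∞)` for `c > 0`. -/
lemma antitone_aux {c : ℝ} (hc : 0 < c) :
    AntitoneOn (fun t : ℝ => t * (1 + Real.log c - Real.log t)) (Set.Ici c) := by
  have hderiv : ∀ t ∈ interior (Set.Ici c),
      HasDerivAt (fun t : ℝ => t * (1 + Real.log c - Real.log t))
        (Real.log c - Real.log t) t := by
    intro t ht
    rw [interior_Ici, Set.mem_Ioi] at ht
    have ht0 : t ≠ 0 := ne_of_gt (hc.trans ht)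
    have h := (hasDerivAt_id t).mul
      ((hasDerivAt_const t (1 + Real.log c)).sub (Real.hasDerivAt_log ht0))
    refine h.congr_deriv ?_
    simp only [Pi.sub_apply, id_eq, one_mul, zero_sub, mul_neg, mul_inv_cancel₀ ht0]
    ring
  apply antitoneOn_of_deriv_nonpos (convex_Ici c)
  · apply ContinuousOn.mul continuousOn_id
    apply ContinuousOn.sub continuousOn_const
    exact Real.continuousOn_log.mono fun t ht =>
      Set.mem_compl_singleton_iff.mpr (ne_of_gt (lt_of_lt_of_le hc ht))
  · intro t ht
    exact (hderiv t ht).differentiableAt.differentiableWithinAt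
  · intro t ht
    rw [(hderiv t ht).deriv]
    have ht' : c < t := by rwa [interior_Ici, Set.mem_Ioi] at ht
    have := Real.log_le_log hc ht'.le
    linarith

/-- Erdős–Tetali type upper tail bound: if `Z` is the largest number of pairwise disjoint
edge-sets from `S` present in `G_{n,p}` and `μ = ∑_{β ∈ S} p^{|β|}`, then for every `x > μ`
we have `Pr(Z ≥ x) ≤ (eμ/x)^x`. -/
theorem claim_upper_tail (n : ℕ) (p : ℝ) (hp0 : 0 ≤ p) (hp1 : p ≤ 1)
    (S : Finset (Finset (Sym2 (Fin n)))) (hS : ∀ β ∈ S, β ⊆ allEdges n)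
    (μ : ℝ) (hμ : μ = ∑ β ∈ S, p ^ β.card)
    (x : ℝ) (hx : μ < x) :
    gnpProb n p {G | x ≤ (maxDisjointPresent S G : ℝ)} ≤
      (Real.exp 1 * μ / x) ^ x := by
  have hμ0 : 0 ≤ μ := hμ ▸ Finset.sum_nonneg fun β _ => pow_nonneg hp0 _
  have hx0 : 0 < x := lt_of_le_of_lt hμ0 hx
  set k : ℕ := ⌈x⌉₊ with hk
  have hk1 : 1 ≤ k := Nat.one_le_iff_ne_zero.mpr (by
    simp only [hk, ne_eq, Nat.ceil_eq_zero, not_le]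
    exact hx0)
  have hxk : x ≤ (k : ℝ) := Nat.le_ceil x
  -- the family of events
  set F : Finset (Finset (Finset (Sym2 (Fin n)))) :=
    (S.powersetCard k).filter fun T => ∀ β ∈ T, ∀ γ ∈ T, β ≠ γ → Disjoint β γ with hF
  -- Step 1: union bound
  have step1 : gnpProb n p {G | x ≤ (maxDisjointPresent S G : ℝ)}
      ≤ ∑ T ∈ F, gnpProb n p {G | T.sup id ⊆ G} := by
    apply gnpProb_union_bound n p hp0 hp1
    intro G _ hGA
    rw [Set.mem_setOf_eq] at hGA
    have hkZ : k ≤ maxDisjointPresent S G := Nat.ceil_le.mpr hGA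
    rw [maxDisjointPresent] at hkZ
    have hne : (S.powerset.filter fun T =>
        (∀ β ∈ T, β ⊆ G) ∧ ∀ β ∈ T, ∀ γ ∈ T, β ≠ γ → Disjoint β γ).Nonempty := by
      refine ⟨∅, ?_⟩
      simp
    obtain ⟨T₀, hT₀mem, hT₀sup⟩ := Finset.exists_mem_eq_sup _ hne Finset.card
    rw [hT₀sup] at hkZ
    rw [Finset.mem_filter, Finset.mem_powerset] at hT₀mem
    have hT₀S := hT₀mem.1
    have hT₀G := hT₀mem.2.1
    have hT₀disj := hT₀mem.2.2
    obtain ⟨T, hTT₀, hTcard⟩ := Finset.exists_subset_card_eq hkZ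
    refine ⟨T, ?_, ?_⟩
    · rw [hF, Finset.mem_filter, Finset.mem_powersetCard]
      exact ⟨⟨hTT₀.trans hT₀S, hTcard⟩,
        fun β hβ γ hγ hne' => hT₀disj β (hTT₀ hβ) γ (hTT₀ hγ) hne'⟩
    · rw [Set.mem_setOf_eq]
      exact Finset.sup_le fun β hβ => hT₀G β (hTT₀ hβ)
  -- Step 2: each event's probability
  have step2 : ∀ T ∈ F, gnpProb n p {G | T.sup id ⊆ G} = ∏ β ∈ T, p ^ β.card := by
    intro T hT
    rw [hF, Finset.mem_filter, Finset.mem_powersetCard] at hT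
    obtain ⟨⟨hTS, _⟩, hTdisj⟩ := hT
    have hsub : T.sup id ⊆ allEdges n :=
      Finset.sup_le fun β hβ => hS β (hTS hβ)
    rw [gnpProb_superset n p _ hsub]
    have hcard : (T.sup id).card = ∑ β ∈ T, β.card := by
      rw [Finset.sup_eq_biUnion]
      exact Finset.card_biUnion fun β hβ γ hγ hne => hTdisj β hβ γ hγ hne
    rw [hcard, ← Finset.prod_pow_eq_pow_sum]
  -- Step 3: the moment bound
  have step3 : ∑ T ∈ F, ∏ β ∈ T, p ^ β.card ≤ μ ^ k / k.factorial := by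
    have hle : ∑ T ∈ F, ∏ β ∈ T, p ^ β.card
        ≤ ∑ T ∈ S.powersetCard k, ∏ β ∈ T, p ^ β.card := by
      refine Finset.sum_le_sum_of_subset_of_nonneg (Finset.filter_subset _ _)
        fun T _ _ => Finset.prod_nonneg fun β _ => pow_nonneg hp0 _
    have hkey : (k.factorial : ℝ) * ∑ T ∈ S.powersetCard k, ∏ β ∈ T, p ^ β.card
        ≤ μ ^ k := hμ ▸ factorial_mul_esymm_le (fun β : Finset (Sym2 (Fin n)) => p ^ β.card)
      (fun β => pow_nonneg hp0 _) S k
    have hfac : (0 : ℝ) < k.factorial := by positivity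
    calc ∑ T ∈ F, ∏ β ∈ T, p ^ β.card
        ≤ ∑ T ∈ S.powersetCard k, ∏ β ∈ T, p ^ β.card := hle
      _ ≤ μ ^ k / k.factorial := by
          rw [le_div_iff₀ hfac]
          linarith [hkey]
  have main : gnpProb n p {G | x ≤ (maxDisjointPresent S G : ℝ)} ≤ μ ^ k / k.factorial := by
    calc gnpProb n p {G | x ≤ (maxDisjointPresent S G : ℝ)}
        ≤ ∑ T ∈ F, gnpProb n p {G | T.sup id ⊆ G} := step1
      _ = ∑ T ∈ F, ∏ β ∈ T, p ^ β.card := Finset.sum_congr rfl step2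
      _ ≤ μ ^ k / k.factorial := step3
  -- Step 4: analytic bound
  rcases eq_or_lt_of_le hμ0 with hμ0' | hμpos
  · -- μ = 0
    have hμz : μ = 0 := hμ0'.symm
    have : μ ^ k / k.factorial = 0 := by
      rw [hμz, zero_pow (by omega : k ≠ 0), zero_div]
    rw [hμz, mul_zero, zero_div, Real.zero_rpow (ne_of_gt hx0)]
    exact main.trans (le_of_eq this)
  · -- μ > 0
    have hkpos : (0 : ℝ) < k := by exact_mod_cast hk1
    have hstir : ((k : ℝ)) ^ k / k.factorial ≤ Real.exp 1 ^ k := by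
      have := Real.pow_div_factorial_le_exp (x := (k : ℝ)) (by positivity) k
      rwa [← Real.exp_one_pow] at this
    have hfacpos : (0 : ℝ) < k.factorial := by positivity
    have h4 : μ ^ k / k.factorial ≤ (Real.exp 1 * μ / k) ^ k := by
      rw [div_pow, mul_pow]
      rw [div_le_div_iff₀ hfacpos (by positivity : (0:ℝ) < (k:ℝ) ^ k)]
      have h5 : (k : ℝ) ^ k ≤ Real.exp 1 ^ k * k.factorial := by
        have := (div_le_iff₀ hfacpos).mp hstir
        linarith
      calc μ ^ k * (k : ℝ) ^ k ≤ μ ^ k * (Real.exp 1 ^ k * k.factorial) :=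
            mul_le_mul_of_nonneg_left h5 (by positivity)
        _ = Real.exp 1 ^ k * μ ^ k * k.factorial := by ring
    -- convert to exp form and use antitonicity
    have hlog : ∀ t : ℝ, 0 < t →
        Real.exp 1 * μ / t = Real.exp (1 + Real.log μ - Real.log t) := by
      intro t ht
      rw [Real.exp_sub, Real.exp_add, Real.exp_log hμpos, Real.exp_log ht]
    have hform : ∀ t : ℝ, 0 < t →
        Real.exp 1 * μ / t ∈ Set.Ioi (0:ℝ) := fun t ht => by
      simp only [Set.mem_Ioi]; positivity
    have hrpow : ∀ t : ℝ, 0 < t → (Real.exp 1 * μ / t) ^ (t : ℝ)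
        = Real.exp (t * (1 + Real.log μ - Real.log t)) := by
      intro t ht
      rw [Real.rpow_def_of_pos (by positivity), hlog t ht, Real.log_exp, mul_comm]
    have hmono := antitone_aux hμpos (Set.mem_Ici.mpr hx.le)
      (Set.mem_Ici.mpr (hx.le.trans hxk)) hxk
    have hfinal : ((Real.exp 1 * μ / k) ^ (k:ℕ) : ℝ) ≤ (Real.exp 1 * μ / x) ^ x := by
      have hcast : ((Real.exp 1 * μ / k) ^ (k:ℕ) : ℝ)
          = (Real.exp 1 * μ / k) ^ ((k : ℕ) : ℝ) := by
        rw [Real.rpow_natCast]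
      rw [hcast, hrpow (k : ℝ) hkpos, hrpow x hx0]
      exact Real.exp_le_exp.mpr hmono
    calc gnpProb n p {G | x ≤ (maxDisjointPresent S G : ℝ)}
        ≤ μ ^ k / k.factorial := main
      _ ≤ (Real.exp 1 * μ / k) ^ k := h4
      _ ≤ (Real.exp 1 * μ / x) ^ x := hfinal
end
end

section
/- Let H be a strictly 2-balanced graph with m_2(H) > 1. For every δ > 0 there exists C_0 = C_0(δ,H) such that for every C ≥ C_0 there exists c_0 = c_0(C,δ,H) > 0 such that for every 0 < c ≤ c_0, setting n := ⌊c·(k/\log k)^{m_2(H)}⌋ and p := C(\log k)/k, the following holds for all sufficiently large k and every fixed k-element vertex set K: the probability that G_{n,p} contains at least (δ/2)·\binom{k}{2}·p pairwise edge-disjoint copies of H from H*_K is at most exp(−(δ/2)·\binom{k}{2}·p), which is at most n^{−k}. -/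
open Finset Filter
open scoped Classical

noncomputable section

/-- The vertices covered by a finite set of edges. -/
def edgeSupport {V : Type*} [Fintype V] (S : Finset (Sym2 V)) : Finset V :=
  Finset.univ.filter fun v => ∃ e ∈ S, v ∈ e

/-- The 2-density value `(e_F - 1)/(v_F - 2)` of the subgraph `F` spanned by the edge set `S`
(with vertex set the support of `S`), which is `1/2` when `F = K₂`. -/
def m2value {V : Type*} [Fintype V] (S : Finset (Sym2 V)) : ℝ :=
  if 3 ≤ (edgeSupport S).card then
    ((S.card : ℝ) - 1) / ((edgeSupport S).card - 2)
  else (1 : ℝ) / 2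

/-- The maximum 2-density over all subgraphs spanned by nonempty finite subsets of the
edge set `T`. -/
def m2set {V : Type*} [Fintype V] (T : Set (Sym2 V)) : ℝ :=
  sSup {q | ∃ S : Finset (Sym2 V), S.Nonempty ∧ ↑S ⊆ T ∧ q = m2value S}

/-- `m₂(H)`: the maximum of `(e_F - 1)/(v_F - 2)` (resp. `1/2` for `F = K₂`) over all
subgraphs `F ⊆ H` with at least one edge. -/
def m2 {V : Type*} [Fintype V] (H : SimpleGraph V) : ℝ :=
  m2set H.edgeSet

/-- `H` is strictly 2-balanced: it has an edge and `m₂(F) < m₂(H)` for every proper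
subgraph `F ⊊ H` with at least one edge. -/
def StrictlyTwoBalanced {V : Type*} [Fintype V] (H : SimpleGraph V) : Prop :=
  H.edgeSet.Nonempty ∧
    ∀ F : H.Subgraph, F ≠ ⊤ → F.edgeSet.Nonempty → m2set F.edgeSet < m2 H

/-- The largest number of pairwise edge-disjoint copies in the collection `F`. -/
def maxEdgeDisjoint {n : ℕ} (F : Finset (Finset (Fin n) × Finset (Sym2 (Fin n)))) : ℕ :=
  (F.powerset.filter fun J =>
      ∀ P ∈ J, ∀ Q ∈ J, P ≠ Q → Disjoint P.2 Q.2).sup Finset.card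


lemma weight_nonneg {p : ℝ} (hp0 : 0 ≤ p) (hp1 : p ≤ 1) (a b : ℕ) :
    0 ≤ p ^ a * (1 - p) ^ b :=
  mul_nonneg (pow_nonneg hp0 _) (pow_nonneg (by linarith) _)

lemma sum_binom_weights {p : ℝ} {α : Type*} [DecidableEq α] (A : Finset α) :
    ∑ S ∈ A.powerset, p ^ S.card * (1 - p) ^ (A.card - S.card) = 1 := by
  have h := Finset.prod_add (fun _ : α => p) (fun _ => 1 - p) A
  simp only [Finset.prod_const] at h
  rw [show p + (1-p) = 1 by ring, one_pow] at h
  calc ∑ S ∈ A.powerset, p ^ S.card * (1 - p) ^ (A.card - S.card)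
      = ∑ S ∈ A.powerset, p ^ S.card * (1 - p) ^ (A \ S).card :=
        Finset.sum_congr rfl fun S hS => by
          rw [Finset.card_sdiff_of_subset (Finset.mem_powerset.1 hS)]
    _ = 1 := h.symm

/-- Union bound. -/
lemma gnpProb_le_sum {n : ℕ} {p : ℝ} (hp0 : 0 ≤ p) (hp1 : p ≤ 1)
    (A : Set (Finset (Sym2 (Fin n)))) {ι : Type*} [DecidableEq ι] (J : Finset ι)
    (B : ι → Set (Finset (Sym2 (Fin n))))
    (hcov : ∀ G ∈ (allEdges n).powerset, G ∈ A → ∃ j ∈ J, G ∈ B j) :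
    gnpProb n p A ≤ ∑ j ∈ J, gnpProb n p (B j) := by
  unfold gnpProb
  rw [Finset.sum_comm]
  refine Finset.sum_le_sum fun G hG => ?_
  have hnn : ∀ i ∈ J, 0 ≤ (fun i => if G ∈ B i then
      p ^ G.card * (1 - p) ^ ((allEdges n).card - G.card) else 0) i := by
    intro i _; dsimp only; split
    · exact weight_nonneg hp0 hp1 _ _
    · exact le_rfl
  by_cases hGA : G ∈ A
  · obtain ⟨j, hj, hBj⟩ := hcov G hG hGA
    rw [if_pos hGA]
    have := Finset.single_le_sum hnn hj
    rw [if_pos hBj] at this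
    exact this
  · rw [if_neg hGA]
    exact Finset.sum_nonneg hnn

/-- Cylinder probability. -/
lemma gnpProb_cylinder {n : ℕ} {p : ℝ} (hp0 : 0 ≤ p) (hp1 : p ≤ 1)
    (E : Finset (Sym2 (Fin n))) (hE : E ⊆ allEdges n) :
    gnpProb n p {G | E ⊆ G} ≤ p ^ E.card := by
  have hrw : gnpProb n p {G | E ⊆ G} = ∑ G ∈ (allEdges n).powerset.filter (fun G => E ⊆ G),
      p ^ G.card * (1 - p) ^ ((allEdges n).card - G.card) := by
    unfold gnpProb
    rw [Finset.sum_filter]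
    refine Finset.sum_congr rfl fun x _ => ?_
    by_cases hx : E ⊆ x <;> simp [hx]
  rw [hrw]
  have key : ∑ G ∈ (allEdges n).powerset.filter (fun G => E ⊆ G),
      p ^ G.card * (1 - p) ^ ((allEdges n).card - G.card)
      = p ^ E.card * ∑ S ∈ ((allEdges n) \ E).powerset,
          p ^ S.card * (1 - p) ^ (((allEdges n) \ E).card - S.card) := by
    rw [Finset.mul_sum]
    refine Finset.sum_nbij' (fun G => G \ E) (fun S => S ∪ E) ?_ ?_ ?_ ?_ ?_
    · intro G hG
      simp only [Finset.mem_filter, Finset.mem_powerset] at hG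
      exact Finset.mem_powerset.2 (Finset.sdiff_subset_sdiff hG.1 le_rfl)
    · intro S hS
      simp only [Finset.mem_powerset] at hS
      refine Finset.mem_filter.2 ⟨Finset.mem_powerset.2 ?_, Finset.subset_union_right⟩
      exact Finset.union_subset (hS.trans Finset.sdiff_subset) hE
    · intro G hG
      simp only [Finset.mem_filter, Finset.mem_powerset] at hG
      exact Finset.sdiff_union_of_subset hG.2
    · intro S hS
      simp only [Finset.mem_powerset] at hS
      show (S ∪ E) \ E = S
      rw [Finset.union_sdiff_cancel_right
        (Finset.disjoint_left.2 fun a haS haE => (Finset.mem_sdiff.1 (hS haS)).2 haE)]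
    · intro G hG
      simp only [Finset.mem_filter, Finset.mem_powerset] at hG
      have h1 : (G \ E).card = G.card - E.card := Finset.card_sdiff_of_subset hG.2
      have h2 : ((allEdges n) \ E).card = (allEdges n).card - E.card := Finset.card_sdiff_of_subset hE
      have hle : E.card ≤ G.card := Finset.card_le_card hG.2
      have hle2 : G.card ≤ (allEdges n).card := Finset.card_le_card hG.1
      rw [h2, h1]
      have h3 : ((allEdges n).card - E.card) - (G.card - E.card) = (allEdges n).card - G.card := by
        omega
      rw [h3, ← mul_assoc, ← pow_add, Nat.add_sub_cancel' hle]
  rw [key, sum_binom_weights, mul_one]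


variable {V : Type*} [Fintype V]

lemma m2set_coe_eq (T : Finset (Sym2 V)) :
    {q | ∃ S : Finset (Sym2 V), S.Nonempty ∧ ↑S ⊆ (↑T : Set (Sym2 V)) ∧ q = m2value S}
      = ↑((T.powerset.filter (fun S => S.Nonempty)).image m2value) := by
  ext q
  simp only [Set.mem_setOf_eq, Finset.coe_image, Set.mem_image, Finset.mem_coe,
    Finset.mem_filter, Finset.mem_powerset]
  constructor
  · rintro ⟨S, hne, hsub, rfl⟩
    exact ⟨S, ⟨by exact_mod_cast hsub, hne⟩, rfl⟩
  · rintro ⟨S, ⟨hsub, hne⟩, rfl⟩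
    exact ⟨S, hne, by exact_mod_cast hsub, rfl⟩

/-- For a nonempty finset of edges `T`, `m2set (↑T : Set (Sym2 V))` is attained by some nonempty `S₀ ⊆ T`,
and dominates `m2value S` for every nonempty `S ⊆ T`. -/
lemma m2set_spec (T : Finset (Sym2 V)) (hT : T.Nonempty) :
    (∃ S₀ : Finset (Sym2 V), S₀.Nonempty ∧ S₀ ⊆ T ∧ m2set (↑T : Set (Sym2 V)) = m2value S₀) ∧
      ∀ S : Finset (Sym2 V), S.Nonempty → S ⊆ T → m2value S ≤ m2set (↑T : Set (Sym2 V)) := by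
  set I := (T.powerset.filter (fun S => S.Nonempty)).image m2value with hI
  have hIne : I.Nonempty := ⟨m2value T, Finset.mem_image_of_mem _ (by
    simp [Finset.mem_powerset, hT])⟩
  have hsup : m2set (↑T : Set (Sym2 V)) = I.max' hIne := by
    rw [m2set, m2set_coe_eq T, Finset.Nonempty.csSup_eq_max']
  constructor
  · obtain ⟨S₀, hS₀, hval⟩ := Finset.mem_image.1 (I.max'_mem hIne)
    simp only [Finset.mem_filter, Finset.mem_powerset] at hS₀
    exact ⟨S₀, hS₀.2, hS₀.1, by rw [hsup, hval]⟩
  · intro S hne hsub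
    rw [hsup]
    exact Finset.le_max' _ _ (Finset.mem_image_of_mem _ (by simp [Finset.mem_powerset, hsub, hne]))

def finsetSubgraph (H : SimpleGraph V) (S : Finset (Sym2 V)) (hS : ↑S ⊆ H.edgeSet) :
    H.Subgraph where
  verts := Set.univ
  Adj x y := s(x, y) ∈ S
  adj_sub := fun hxy => H.mem_edgeSet.1 (hS hxy)
  edge_vert := fun _ => Set.mem_univ _
  symm := ⟨fun x y hxy => by show s(y, x) ∈ S; rw [Sym2.eq_swap]; exact hxy⟩

lemma finsetSubgraph_edgeSet (H : SimpleGraph V) (S : Finset (Sym2 V)) (hS : ↑S ⊆ H.edgeSet) :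
    (finsetSubgraph H S hS).edgeSet = ↑S := by
  ext e
  induction e with
  | _ x y => exact SimpleGraph.Subgraph.mem_edgeSet

def delVertSubgraph (H : SimpleGraph V) (v : V) (hv : ∀ e ∈ H.edgeFinset, v ∉ e) :
    H.Subgraph where
  verts := {v}ᶜ
  Adj := H.Adj
  adj_sub := id
  edge_vert := by
    intro a b hab
    simp only [Set.mem_compl_iff, Set.mem_singleton_iff]
    rintro rfl
    exact hv s(a, b) (SimpleGraph.mem_edgeFinset.2 ((H.mem_edgeSet).2 hab)) (Sym2.mem_mk_left a b)
  symm := H.symm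

lemma m2_struct (H : SimpleGraph V) (hH : StrictlyTwoBalanced H) :
    m2 H = m2value H.edgeFinset ∧ edgeSupport H.edgeFinset = Finset.univ := by
  have hEne : H.edgeFinset.Nonempty := by
    obtain ⟨e, he⟩ := hH.1
    exact ⟨e, SimpleGraph.mem_edgeFinset.2 he⟩
  have hcoe : (↑H.edgeFinset : Set (Sym2 V)) = H.edgeSet := H.coe_edgeFinset
  obtain ⟨⟨S₀, hS₀ne, hS₀sub, hS₀val⟩, hle⟩ := m2set_spec H.edgeFinset hEne
  have hm2 : m2 H = m2value S₀ := by rw [m2, ← hcoe]; exact hS₀val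
  have hS₀eq : S₀ = H.edgeFinset := by
    by_contra hne
    have hsub' : (↑S₀ : Set (Sym2 V)) ⊆ H.edgeSet := by
      rw [← hcoe]; exact_mod_cast hS₀sub
    set F := finsetSubgraph H S₀ hsub' with hF
    have hFtop : F ≠ ⊤ := by
      intro htop
      have : F.edgeSet = H.edgeSet := by rw [htop, SimpleGraph.Subgraph.edgeSet_top]
      rw [finsetSubgraph_edgeSet, ← hcoe] at this
      exact hne (Finset.coe_injective this)
    have hFne : F.edgeSet.Nonempty := by
      rw [finsetSubgraph_edgeSet]
      exact_mod_cast hS₀ne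
    have hlt := hH.2 F hFtop hFne
    rw [finsetSubgraph_edgeSet] at hlt
    have hge := (m2set_spec S₀ hS₀ne).2 S₀ hS₀ne le_rfl
    rw [← hm2] at hge
    -- hlt : m2set ↑S₀ < m2 H, hge : m2 H ≤ m2set ↑S₀
    exact absurd hlt (not_lt.2 hge)
  refine ⟨by rw [hm2, hS₀eq], ?_⟩
  by_contra hsupp
  have hex : ∃ v, v ∉ edgeSupport H.edgeFinset := by
    by_contra hall
    push_neg at hall
    exact hsupp (Finset.eq_univ_iff_forall.2 hall)
  obtain ⟨v, hv⟩ := hex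
  have hv' : ∀ e ∈ H.edgeFinset, v ∉ e := by
    intro e he hve
    exact hv (Finset.mem_filter.2 ⟨Finset.mem_univ v, e, he, hve⟩)
  set F := delVertSubgraph H v hv' with hF
  have hFtop : F ≠ ⊤ := by
    intro htop
    have : F.verts = (⊤ : H.Subgraph).verts := by rw [htop]
    rw [SimpleGraph.Subgraph.verts_top] at this
    have hvmem : v ∈ F.verts := this ▸ Set.mem_univ v
    exact hvmem rfl
  have hFedge : F.edgeSet = H.edgeSet := by
    ext e
    induction e with
    | _ x y =>
      rw [SimpleGraph.Subgraph.mem_edgeSet, SimpleGraph.mem_edgeSet]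
      exact Iff.rfl
  have hlt := hH.2 F hFtop (hFedge ▸ hH.1)
  rw [hFedge] at hlt
  exact lt_irrefl _ hlt

lemma m2_formula {h : ℕ} (H : SimpleGraph (Fin h)) (hH : StrictlyTwoBalanced H)
    (hm : 1 < m2 H) :
    3 ≤ h ∧ 3 ≤ H.edgeFinset.card ∧ m2 H * ((h : ℝ) - 2) = (H.edgeFinset.card : ℝ) - 1 := by
  obtain ⟨hval, hsupp⟩ := m2_struct H hH
  have hcard : (edgeSupport H.edgeFinset).card = h := by
    rw [hsupp, Finset.card_univ, Fintype.card_fin]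
  have h3 : 3 ≤ h := by
    by_contra hlt
    rw [hval, m2value, hcard, if_neg hlt] at hm
    norm_num at hm
  have hform : m2 H = ((H.edgeFinset.card : ℝ) - 1) / ((h : ℝ) - 2) := by
    rw [hval, m2value, hcard, if_pos h3]
  have hh2 : (0 : ℝ) < (h : ℝ) - 2 := by
    have : (3 : ℝ) ≤ (h : ℝ) := by exact_mod_cast h3
    linarith
  have hmul : m2 H * ((h : ℝ) - 2) = (H.edgeFinset.card : ℝ) - 1 := by
    rw [hform, div_mul_cancel₀ _ (ne_of_gt hh2)]
  refine ⟨h3, ?_, hmul⟩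
  have : (1 : ℝ) * ((h : ℝ) - 2) < (H.edgeFinset.card : ℝ) - 1 := by
    rw [← hmul]
    exact mul_lt_mul_of_pos_right hm hh2
  have : (2 : ℝ) < (H.edgeFinset.card : ℝ) := by
    have h3' : (3 : ℝ) ≤ (h : ℝ) := by exact_mod_cast h3
    nlinarith
  have : (2 : ℕ) < H.edgeFinset.card := by exact_mod_cast this
  omega


lemma HstarK_isCopyPair {h n : ℕ} {H : SimpleGraph (Fin h)} {G : Finset (Sym2 (Fin n))}
    {K : Finset (Fin n)} {P} (hP : P ∈ HstarK H G K) : IsCopyPair H G P :=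
  (Finset.mem_filter.1 (Finset.mem_filter.1 (Finset.mem_filter.1 hP).1).1).2

lemma HstarK_mono {h n : ℕ} (H : SimpleGraph (Fin h)) {G G' : Finset (Sym2 (Fin n))}
    (hGG : G ⊆ G') (K : Finset (Fin n)) : HstarK H G K ⊆ HstarK H G' K := by
  intro P hP
  have h1 := Finset.mem_filter.1 hP
  have h2 := Finset.mem_filter.1 h1.1
  have h3 := Finset.mem_filter.1 h2.1
  obtain ⟨φ, hφ1, hφ2, hφ3⟩ := h3.2
  exact Finset.mem_filter.2 ⟨Finset.mem_filter.2 ⟨Finset.mem_filter.2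
    ⟨h3.1, φ, hφ1, hφ2, hφ3.trans hGG⟩, h2.2⟩, h1.2⟩

lemma copy_edges_eq {h n : ℕ} {H : SimpleGraph (Fin h)}
    {P : Finset (Fin n) × Finset (Sym2 (Fin n))} (φ : Fin h ↪ Fin n) (hφ : (↑P.2 : Set (Sym2 (Fin n))) = Sym2.map ⇑φ '' H.edgeSet) :
    P.2 = H.edgeFinset.image (Sym2.map ⇑φ) := by
  apply Finset.coe_injective
  rw [Finset.coe_image, SimpleGraph.coe_edgeFinset, hφ]

lemma copy_edge_card {h n : ℕ} {H : SimpleGraph (Fin h)} {G : Finset (Sym2 (Fin n))}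
    {P : Finset (Fin n) × Finset (Sym2 (Fin n))} (hP : IsCopyPair H G P) : P.2.card = H.edgeFinset.card := by
  obtain ⟨φ, -, hφ2, -⟩ := hP
  rw [copy_edges_eq φ hφ2]
  exact Finset.card_image_of_injective _ (Sym2.map.injective φ.injective)

lemma card_HstarK_le {h n : ℕ} (H : SimpleGraph (Fin h)) (K : Finset (Fin n)) (hn : 0 < n) :
    (HstarK H (allEdges n) K).card ≤ h * h * (K.card * K.card * n ^ (h - 2)) := by
  classical
  set t : Finset (Fin h → Fin n) :=
    (Finset.univ.offDiag).biUnion (fun ij =>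
      Fintype.piFinset (fun x => if x = ij.1 then K else if x = ij.2 then K else Finset.univ))
    with ht
  have hmain : (HstarK H (allEdges n) K).card ≤ t.card := by
    set f : Finset (Fin n) × Finset (Sym2 (Fin n)) → (Fin h → Fin n) := fun P =>
      if hP : IsCopyPair H (allEdges n) P then ⇑(Classical.choose hP) else fun _ => ⟨0, hn⟩
      with hf
    apply Finset.card_le_card_of_injOn f
    · intro P hP
      have hcp := HstarK_isCopyPair hP
      rw [hf]; dsimp only
      rw [dif_pos hcp]
      set φ := Classical.choose hcp with hφdef
      obtain ⟨hφ1, hφ2, hφ3⟩ := Classical.choose_spec hcp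
      have hcard2 : (P.1 ∩ K).card = 2 := (Finset.mem_filter.1 hP).2
      obtain ⟨u, v, huv, hod⟩ := Finset.card_eq_two.1 hcard2
      have hu : u ∈ P.1 ∩ K := hod ▸ Finset.mem_insert_self u {v}
      have hv : v ∈ P.1 ∩ K := hod ▸ Finset.mem_insert_of_mem (Finset.mem_singleton_self v)
      have huK : u ∈ K := (Finset.mem_inter.1 hu).2
      have hvK : v ∈ K := (Finset.mem_inter.1 hv).2
      obtain ⟨i, -, hi⟩ := Finset.mem_image.1 (hφ1 ▸ (Finset.mem_inter.1 hu).1)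
      obtain ⟨j, -, hj⟩ := Finset.mem_image.1 (hφ1 ▸ (Finset.mem_inter.1 hv).1)
      have hij : i ≠ j := by rintro rfl; exact huv (hi ▸ hj ▸ rfl)
      refine Finset.mem_biUnion.2 ⟨(i, j), Finset.mem_offDiag.2
        ⟨Finset.mem_univ _, Finset.mem_univ _, hij⟩, Fintype.mem_piFinset.2 fun x => ?_⟩
      dsimp only
      split_ifs with hxi hxj
      · subst hxi; rw [hi]; exact huK
      · subst hxj; rw [hj]; exact hvK
      · exact Finset.mem_univ _
    · intro P hP Q hQ hfPQ
      have hcpP := HstarK_isCopyPair hP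
      have hcpQ := HstarK_isCopyPair hQ
      rw [hf] at hfPQ; dsimp only at hfPQ
      rw [dif_pos hcpP, dif_pos hcpQ] at hfPQ
      obtain ⟨hP1, hP2, -⟩ := Classical.choose_spec hcpP
      obtain ⟨hQ1, hQ2, -⟩ := Classical.choose_spec hcpQ
      refine Prod.ext ?_ ?_
      · rw [hP1, hQ1, hfPQ]
      · apply Finset.coe_injective
        rw [hP2, hQ2, hfPQ]
  refine hmain.trans ?_
  rw [ht]
  refine (Finset.card_biUnion_le).trans ?_
  have hpi : ∀ ij ∈ Finset.univ.offDiag (α := Fin h),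
      (Fintype.piFinset (fun x => if x = ij.1 then K
        else if x = ij.2 then K else (Finset.univ : Finset (Fin n)))).card
        = K.card * K.card * n ^ (h - 2) := by
    rintro ⟨i, j⟩ hij
    have hijne : i ≠ j := (Finset.mem_offDiag.1 hij).2.2
    rw [Fintype.card_piFinset]
    dsimp only
    have hcongr : ∀ x : Fin h, (if x = i then K else if x = j then K else
        (Finset.univ : Finset (Fin n))).card
        = if x = i then K.card else if x = j then K.card else n := by
      intro x; split_ifs <;> simp
    rw [Finset.prod_congr rfl (fun x _ => hcongr x)]
    rw [← Finset.prod_sdiff (Finset.subset_univ ({i, j} : Finset (Fin h)))]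
    have h1 : ∏ x ∈ ({i, j} : Finset (Fin h)),
        (if x = i then K.card else if x = j then K.card else n) = K.card * K.card := by
      rw [Finset.prod_pair hijne, if_pos rfl, if_neg (Ne.symm hijne), if_pos rfl]
    have h2 : ∏ x ∈ Finset.univ \ ({i, j} : Finset (Fin h)),
        (if x = i then K.card else if x = j then K.card else n) = n ^ (h - 2) := by
      rw [Finset.prod_congr rfl (fun x hx => ?_), Finset.prod_const]
      · congr 1
        rw [Finset.card_sdiff_of_subset (Finset.subset_univ _), Finset.card_univ, Fintype.card_fin,
          Finset.card_pair hijne]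
      · have hx' := Finset.mem_sdiff.1 hx
        have : x ≠ i ∧ x ≠ j := by
          constructor <;> rintro rfl <;>
            exact hx'.2 (by simp [Finset.mem_insert, Finset.mem_singleton])
        rw [if_neg this.1, if_neg this.2]
    rw [h1, h2, mul_comm]
  rw [Finset.sum_congr rfl hpi, Finset.sum_const, smul_eq_mul]
  have : (Finset.univ.offDiag (α := Fin h)).card ≤ h * h := by
    rw [Finset.offDiag_card, Finset.card_univ, Fintype.card_fin]
    exact Nat.sub_le _ _
  exact Nat.mul_le_mul_right _ this


lemma exists_disjoint_family {n : ℕ} (F : Finset (Finset (Fin n) × Finset (Sym2 (Fin n))))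
    (T : ℕ) (hT : T ≤ maxEdgeDisjoint F) :
    ∃ J, J ⊆ F ∧ J.card = T ∧ ∀ P ∈ J, ∀ Q ∈ J, P ≠ Q → Disjoint P.2 Q.2 := by
  classical
  set S := F.powerset.filter fun J => ∀ P ∈ J, ∀ Q ∈ J, P ≠ Q → Disjoint P.2 Q.2 with hS
  have hSne : S.Nonempty := ⟨∅, Finset.mem_filter.2 ⟨Finset.empty_mem_powerset F,
    fun P hP => absurd hP (Finset.notMem_empty P)⟩⟩
  obtain ⟨J₀, hJ₀S, hJ₀⟩ := Finset.exists_mem_eq_sup S hSne Finset.card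
  have hJ₀' := Finset.mem_filter.1 hJ₀S
  have hTle : T ≤ J₀.card := by rw [← hJ₀]; exact hT
  obtain ⟨J, hJsub, hJcard⟩ := Finset.exists_subset_card_eq hTle
  exact ⟨J, (hJsub.trans (Finset.mem_powerset.1 hJ₀'.1)), hJcard,
    fun P hP Q hQ => hJ₀'.2 P (hJsub hP) Q (hJsub hQ)⟩

lemma pow_div_factorial_le_exp_neg {x : ℝ} {T : ℕ} (hx : 0 ≤ x)
    (hxT : Real.exp 2 * x ≤ T) : x ^ T / T.factorial ≤ Real.exp (-(T : ℝ)) := by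
  have hfac : (0 : ℝ) < T.factorial := by exact_mod_cast T.factorial_pos
  have h1 : x ≤ (T : ℝ) * Real.exp (-2) := by
    rw [Real.exp_neg]
    rw [mul_comm, ← div_eq_inv_mul]
    exact (le_div_iff₀ (Real.exp_pos 2)).2 (by linarith [hxT])
  have h2 : x ^ T ≤ ((T : ℝ) * Real.exp (-2)) ^ T := pow_le_pow_left₀ hx h1 T
  have h3 : (T : ℝ) ^ T ≤ Real.exp T * T.factorial := by
    have hsum := Real.sum_le_exp_of_nonneg (x := (T : ℝ)) (Nat.cast_nonneg T) (T + 1)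
    have hterm : (T : ℝ) ^ T / T.factorial ≤ Real.exp T := by
      refine le_trans ?_ hsum
      refine Finset.single_le_sum (f := fun i => (T : ℝ) ^ i / i.factorial) ?_
        (Finset.self_mem_range_succ T)
      intro i _
      positivity
    calc (T : ℝ) ^ T = ((T : ℝ) ^ T / T.factorial) * T.factorial := by
          field_simp
      _ ≤ Real.exp T * T.factorial := by
          exact mul_le_mul_of_nonneg_right hterm hfac.le
  calc x ^ T / T.factorial ≤ ((T : ℝ) * Real.exp (-2)) ^ T / T.factorial := by
        exact div_le_div_of_nonneg_right h2 hfac.le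
    _ = (T : ℝ) ^ T / T.factorial * Real.exp (-2) ^ T := by ring
    _ ≤ Real.exp T * Real.exp (-2) ^ T := by
        refine mul_le_mul_of_nonneg_right ?_ (by positivity)
        exact (div_le_iff₀ hfac).2 h3
    _ = Real.exp (-(T : ℝ)) := by
        rw [← Real.exp_nat_mul, ← Real.exp_add]
        ring_nf


set_option maxHeartbeats 1000000 in
/-- Upper tail bound for `|I_K|`: the probability that `G_{n,p}` contains at least
`(δ/2) C(k,2) p` pairwise edge-disjoint copies of `H` from `H*_K` is at most
`exp(-(δ/2) C(k,2) p) ≤ n^{-k}`. -/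
theorem IK_upper_tail {h : ℕ} (H : SimpleGraph (Fin h)) (hH : StrictlyTwoBalanced H)
    (hm : 1 < m2 H) (δ : ℝ) (hδ : 0 < δ) :
    ∃ C₀ : ℝ, ∀ C : ℝ, C₀ ≤ C → ∃ c₀ : ℝ, 0 < c₀ ∧ ∀ c : ℝ, 0 < c → c ≤ c₀ →
      ∀ᶠ k : ℕ in atTop, ∀ K : Finset (Fin ⌊c * ((k : ℝ) / Real.log k) ^ m2 H⌋₊), K.card = k →
        gnpProb ⌊c * ((k : ℝ) / Real.log k) ^ m2 H⌋₊ (C * Real.log k / k)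
            {G | δ / 2 * (k.choose 2 : ℝ) * (C * Real.log k / k) ≤ (maxEdgeDisjoint (HstarK H G K) : ℝ)}
          ≤ Real.exp (-(δ / 2 * (k.choose 2 : ℝ) * (C * Real.log k / k))) ∧
        Real.exp (-(δ / 2 * (k.choose 2 : ℝ) * (C * Real.log k / k))) ≤ (⌊c * ((k : ℝ) / Real.log k) ^ m2 H⌋₊ : ℝ) ^ (-(k : ℝ)) := by
  classical
  obtain ⟨h3, heH3, hmul⟩ := m2_formula H hH hm
  set eH := H.edgeFinset.card with heH
  have hm2pos : 0 < m2 H := lt_trans one_pos hm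
  refine ⟨max 1 (6 * m2 H / δ), fun C hC => ?_⟩
  have hC1 : 1 ≤ C := le_trans (le_max_left _ _) hC
  have hCpos : 0 < C := lt_of_lt_of_le one_pos hC1
  have hCm2 : m2 H ≤ δ * C / 6 := by
    have h6 : 6 * m2 H / δ ≤ C := le_trans (le_max_right _ _) hC
    rw [div_le_iff₀ hδ] at h6
    nlinarith
  have hCpow : 0 < C ^ (eH - 1) := pow_pos hCpos _
  set D := 6 * Real.exp 2 * (h : ℝ) ^ 2 * C ^ (eH - 1) with hD
  have hDpos : 0 < D := by
    have := Real.exp_pos 2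
    have hh0 : (0:ℝ) < (h:ℝ) := by exact_mod_cast lt_of_lt_of_le (by norm_num) h3
    positivity
  refine ⟨min 1 (δ / D), lt_min one_pos (by positivity), ?_⟩
  intro c hc hcle
  have hc1 : c ≤ 1 := hcle.trans (min_le_left _ _)
  have hc2 : c ≤ δ / D := hcle.trans (min_le_right _ _)
  have hcD : c * D ≤ δ := by rw [← le_div_iff₀ hDpos]; exact hc2
  filter_upwards [eventually_ge_atTop 3, eventually_ge_atTop ⌈(2*C)^2⌉₊] with k hk3 hkC
  set n := ⌊c * ((k : ℝ) / Real.log k) ^ m2 H⌋₊ with hn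
  set p := C * Real.log k / k with hpdef
  set t := δ / 2 * (k.choose 2 : ℝ) * p with htdef
  intro K hK
  -- basic scalar facts
  have hk3R : (3 : ℝ) ≤ (k : ℝ) := by exact_mod_cast hk3
  have hkpos : (0 : ℝ) < (k : ℝ) := by linarith
  have hlogk : 1 ≤ Real.log k := by
    rw [Real.le_log_iff_exp_le hkpos]
    calc Real.exp 1 ≤ 2.7182818286 := Real.exp_one_lt_d9.le
      _ ≤ (k : ℝ) := by linarith
  have hlogpos : (0 : ℝ) < Real.log k := lt_of_lt_of_le one_pos hlogk
  have hp0 : 0 < p := by rw [hpdef]; positivity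
  have hp1 : p ≤ 1 := by
    have hsq : (0:ℝ) < Real.sqrt k := Real.sqrt_pos.2 hkpos
    have hlog2 : Real.log k ≤ 2 * Real.sqrt k := by
      have h1 : Real.log k = 2 * Real.log (Real.sqrt k) := by
        rw [Real.log_sqrt hkpos.le]; ring
      have h2 : Real.log (Real.sqrt k) ≤ Real.sqrt k - 1 :=
        Real.log_le_sub_one_of_pos hsq
      linarith
    have hkC' : ((2*C)^2 : ℝ) ≤ (k : ℝ) := Nat.ceil_le.1 hkC
    have h2C : 2 * C ≤ Real.sqrt k := by
      have := Real.sqrt_le_sqrt hkC'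
      rwa [Real.sqrt_sq (by positivity)] at this
    have hkk : (k : ℝ) = Real.sqrt k * Real.sqrt k := (Real.mul_self_sqrt hkpos.le).symm
    rw [hpdef, div_le_one hkpos]
    calc C * Real.log k ≤ C * (2 * Real.sqrt k) := by
          exact mul_le_mul_of_nonneg_left hlog2 hCpos.le
      _ = (2 * C) * Real.sqrt k := by ring
      _ ≤ Real.sqrt k * Real.sqrt k := mul_le_mul_of_nonneg_right h2C hsq.le
      _ = (k : ℝ) := hkk.symm
  have hkn : k ≤ n := by
    have h1 := Finset.card_le_univ K
    simp only [Finset.card_univ, Fintype.card_fin] at h1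
    rw [hK] at h1
    exact h1
  have hnpos : 0 < n := lt_of_lt_of_le (by norm_num) (le_trans hk3 hkn)
  have hnposR : (0 : ℝ) < (n : ℝ) := by exact_mod_cast hnpos
  have hnR : (n : ℝ) ≤ c * ((k : ℝ) / Real.log k) ^ m2 H := Nat.floor_le (by positivity)
  have hchoose : ((k.choose 2 : ℕ) : ℝ) = (k : ℝ) * ((k : ℝ) - 1) / 2 := by
    rw [Nat.cast_choose_two]
  have htpos : 0 < t := by
    rw [htdef, hchoose]
    have : (0:ℝ) < (k:ℝ) * ((k:ℝ) - 1) / 2 := by nlinarith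
    positivity
  set T := ⌈t⌉₊ with hT
  have hT1 : 1 ≤ T := Nat.one_le_iff_ne_zero.2 (by
    intro h0
    rw [hT] at h0
    exact absurd (Nat.ceil_eq_zero.1 h0) (not_le.2 htpos))
  have htT : t ≤ (T : ℝ) := Nat.le_ceil t
  have ht6 : δ / 6 * (k : ℝ)^2 * p ≤ t := by
    rw [htdef, hchoose]
    have hch : (k:ℝ)^2 / 3 ≤ (k : ℝ) * ((k : ℝ) - 1) / 2 := by nlinarith
    nlinarith [hp0.le, hδ.le]
  -- the combinatorial event bound
  set cand := HstarK H (allEdges n) K with hcand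
  set N := cand.card with hN
  set 𝒥 := (cand.powersetCard T).filter
    (fun J => ∀ P ∈ J, ∀ Q ∈ J, P ≠ Q → Disjoint P.2 Q.2) with h𝒥
  set A := {G | δ / 2 * (k.choose 2 : ℝ) * p ≤ (maxEdgeDisjoint (HstarK H G K) : ℝ)} with hA
  have hcov : ∀ G ∈ (allEdges n).powerset, G ∈ A →
      ∃ J ∈ 𝒥, G ∈ {G' | (J.biUnion Prod.snd : Finset (Sym2 (Fin n))) ⊆ G'} := by
    intro G hG hGA
    have hGsub : G ⊆ allEdges n := Finset.mem_powerset.1 hG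
    have htle : t ≤ (maxEdgeDisjoint (HstarK H G K) : ℝ) := hGA
    have hTle : T ≤ maxEdgeDisjoint (HstarK H G K) := Nat.ceil_le.2 htle
    obtain ⟨J, hJsub, hJcard, hJdisj⟩ := exists_disjoint_family _ T hTle
    refine ⟨J, Finset.mem_filter.2 ⟨Finset.mem_powersetCard.2
      ⟨hJsub.trans (HstarK_mono H hGsub K), hJcard⟩, hJdisj⟩, ?_⟩
    intro e he
    obtain ⟨P, hPJ, hPe⟩ := Finset.mem_biUnion.1 he
    obtain ⟨φ, -, -, hφ3⟩ := HstarK_isCopyPair (hJsub hPJ)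
    exact hφ3 hPe
  have hBle : ∀ J ∈ 𝒥, gnpProb n p {G' | (J.biUnion Prod.snd : Finset (Sym2 (Fin n))) ⊆ G'}
      ≤ p ^ (T * eH) := by
    intro J hJ
    have hJ' := Finset.mem_filter.1 hJ
    have hJsub : J ⊆ cand := (Finset.mem_powersetCard.1 hJ'.1).1
    have hJcard : J.card = T := (Finset.mem_powersetCard.1 hJ'.1).2
    have hsubAll : (J.biUnion Prod.snd : Finset (Sym2 (Fin n))) ⊆ allEdges n := by
      intro e he
      obtain ⟨P, hPJ, hPe⟩ := Finset.mem_biUnion.1 he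
      obtain ⟨φ, -, -, hφ3⟩ := HstarK_isCopyPair (hJsub hPJ)
      exact hφ3 hPe
    have hcardU : (J.biUnion Prod.snd : Finset (Sym2 (Fin n))).card = T * eH := by
      rw [Finset.card_biUnion (fun P hP Q hQ hPQ => hJ'.2 P hP Q hQ hPQ)]
      rw [Finset.sum_congr rfl (fun P hP => copy_edge_card (HstarK_isCopyPair (hJsub hP)))]
      rw [Finset.sum_const, smul_eq_mul, hJcard]
    calc gnpProb n p {G' | (J.biUnion Prod.snd : Finset (Sym2 (Fin n))) ⊆ G'}
        ≤ p ^ (J.biUnion Prod.snd : Finset (Sym2 (Fin n))).card :=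
          gnpProb_cylinder hp0.le hp1 _ hsubAll
      _ = p ^ (T * eH) := by rw [hcardU]
  -- counting
  have hNle : (N : ℝ) ≤ (h : ℝ)^2 * ((k : ℝ)^2 * (n : ℝ) ^ (h - 2)) := by
    have := card_HstarK_le H K hnpos
    rw [hK] at this
    rw [hN, hcand]
    calc ((HstarK H (allEdges n) K).card : ℝ) ≤ ((h * h * (k * k * n ^ (h-2)) : ℕ) : ℝ) := by
          exact_mod_cast this
      _ = (h : ℝ)^2 * ((k : ℝ)^2 * (n : ℝ)^(h-2)) := by push_cast; ring
  have hstep : (n : ℝ) ^ (h - 2) * p ^ (eH - 1) ≤ c * C ^ (eH - 1) := by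
    set L := (k : ℝ) / Real.log k with hL
    have hL0 : 0 ≤ L := by positivity
    have h2h : ((h - 2 : ℕ) : ℝ) = (h : ℝ) - 2 := by
      have : (2:ℕ) ≤ h := by omega
      push_cast [this]
      ring
    have heH1 : ((eH - 1 : ℕ) : ℝ) = (eH : ℝ) - 1 := by
      have : (1:ℕ) ≤ eH := by omega
      push_cast [this]
      ring
    have hrpow : (L ^ m2 H) ^ (h - 2) = L ^ (eH - 1) := by
      rw [← Real.rpow_natCast (L ^ m2 H) (h - 2), ← Real.rpow_mul hL0, h2h, hmul, ← heH1,
        Real.rpow_natCast]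
    have h1 : (n : ℝ) ^ (h - 2) ≤ (c * L ^ m2 H) ^ (h - 2) :=
      pow_le_pow_left₀ (by positivity) hnR _
    have h2 : (c * L ^ m2 H) ^ (h - 2) = c ^ (h - 2) * L ^ (eH - 1) := by
      rw [mul_pow, hrpow]
    have hps : p ^ (eH - 1) = C ^ (eH - 1) * (Real.log k / k) ^ (eH - 1) := by
      rw [hpdef, mul_div_assoc, mul_pow]
    have hLL : L ^ (eH - 1) * (Real.log k / (k : ℝ)) ^ (eH - 1) = 1 := by
      rw [← mul_pow, show L * (Real.log k / (k : ℝ)) = 1 from by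
        rw [hL]; field_simp]
      exact one_pow _
    have hcpow : c ^ (h - 2) ≤ c := by
      have h12 : 1 ≤ h - 2 := by omega
      calc c ^ (h - 2) ≤ c ^ 1 := pow_le_pow_of_le_one hc.le hc1 h12
        _ = c := pow_one c
    calc (n : ℝ) ^ (h - 2) * p ^ (eH - 1)
        ≤ c ^ (h - 2) * L ^ (eH - 1) * p ^ (eH - 1) := by
          exact mul_le_mul_of_nonneg_right (h1.trans h2.le) (by positivity)
      _ = c ^ (h - 2) * C ^ (eH - 1) * (L ^ (eH - 1) * (Real.log k / (k : ℝ)) ^ (eH - 1)) := by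
          rw [hps]; ring
      _ = c ^ (h - 2) * C ^ (eH - 1) := by rw [hLL, mul_one]
      _ ≤ c * C ^ (eH - 1) := mul_le_mul_of_nonneg_right hcpow hCpow.le
  have hkey : Real.exp 2 * ((N : ℝ) * p ^ eH) ≤ (T : ℝ) := by
    have hpsplit : p ^ eH = p ^ (eH - 1) * p := by
      have h' : eH - 1 + 1 = eH := by omega
      conv_lhs => rw [← h']
      rw [pow_succ]
    have hx1 : (N : ℝ) * p ^ eH ≤ (h:ℝ)^2 * (k:ℝ)^2 * p * ((n:ℝ)^(h-2) * p^(eH-1)) := by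
      rw [hpsplit]
      have hr : (h : ℝ)^2 * ((k : ℝ)^2 * (n : ℝ) ^ (h - 2)) * (p ^ (eH - 1) * p)
          = (h:ℝ)^2 * (k:ℝ)^2 * p * ((n:ℝ)^(h-2) * p^(eH-1)) := by ring
      calc (N : ℝ) * (p ^ (eH - 1) * p) ≤
          (h : ℝ)^2 * ((k : ℝ)^2 * (n : ℝ) ^ (h - 2)) * (p ^ (eH - 1) * p) := by
            exact mul_le_mul_of_nonneg_right hNle (by positivity)
        _ = _ := hr
    have hx2 : (h:ℝ)^2 * (k:ℝ)^2 * p * ((n:ℝ)^(h-2) * p^(eH-1))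
        ≤ (h:ℝ)^2 * (k:ℝ)^2 * p * (c * C^(eH-1)) := by
      have hh0 : (0:ℝ) < (h:ℝ) := by exact_mod_cast lt_of_lt_of_le (by norm_num) h3
      exact mul_le_mul_of_nonneg_left hstep (by positivity)
    have hx3 : Real.exp 2 * ((h:ℝ)^2 * (k:ℝ)^2 * p * (c * C^(eH-1)))
        = (k:ℝ)^2 * p * (c * D) / 6 := by
      rw [hD]; ring
    have hx4 : (k:ℝ)^2 * p * (c * D) / 6 ≤ (k:ℝ)^2 * p * δ / 6 := by
      have : (k:ℝ)^2 * p * (c * D) ≤ (k:ℝ)^2 * p * δ :=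
        mul_le_mul_of_nonneg_left hcD (by positivity)
      linarith
    have hx5 : (k:ℝ)^2 * p * δ / 6 = δ / 6 * (k:ℝ)^2 * p := by ring
    have hexp2 : (0:ℝ) < Real.exp 2 := Real.exp_pos 2
    calc Real.exp 2 * ((N : ℝ) * p ^ eH)
        ≤ Real.exp 2 * ((h:ℝ)^2 * (k:ℝ)^2 * p * (c * C^(eH-1))) := by
          exact mul_le_mul_of_nonneg_left (hx1.trans hx2) hexp2.le
      _ = (k:ℝ)^2 * p * (c * D) / 6 := hx3
      _ ≤ (k:ℝ)^2 * p * δ / 6 := hx4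
      _ = δ / 6 * (k:ℝ)^2 * p := hx5
      _ ≤ t := ht6
      _ ≤ (T:ℝ) := htT
  -- probability chain
  have hprob : gnpProb n p A ≤ Real.exp (-t) := by
    calc gnpProb n p A
        ≤ ∑ J ∈ 𝒥, gnpProb n p {G' | (J.biUnion Prod.snd : Finset (Sym2 (Fin n))) ⊆ G'} :=
          gnpProb_le_sum hp0.le hp1 A 𝒥 _ hcov
      _ ≤ ∑ J ∈ 𝒥, p ^ (T * eH) := Finset.sum_le_sum hBle
      _ = (𝒥.card : ℝ) * p ^ (T * eH) := by rw [Finset.sum_const, nsmul_eq_mul]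
      _ ≤ (N.choose T : ℝ) * p ^ (T * eH) := by
          refine mul_le_mul_of_nonneg_right ?_ (by positivity)
          have : 𝒥.card ≤ (cand.powersetCard T).card := Finset.card_filter_le _ _
          rw [Finset.card_powersetCard] at this
          exact_mod_cast this
      _ ≤ ((N : ℝ) ^ T / T.factorial) * p ^ (T * eH) := by
          refine mul_le_mul_of_nonneg_right ?_ (by positivity)
          have hnat : N.choose T * T.factorial ≤ N ^ T := by
            rw [mul_comm, ← Nat.descFactorial_eq_factorial_mul_choose]
            exact Nat.descFactorial_le_pow N T
          have hfacpos : (0:ℝ) < (T.factorial : ℝ) := by exact_mod_cast T.factorial_pos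
          rw [le_div_iff₀ hfacpos]
          exact_mod_cast hnat
      _ = ((N : ℝ) * p ^ eH) ^ T / T.factorial := by
          rw [mul_pow, mul_comm T eH, pow_mul]
          ring
      _ ≤ Real.exp (-(T : ℝ)) := pow_div_factorial_le_exp_neg (by positivity) hkey
      _ ≤ Real.exp (-t) := Real.exp_le_exp.2 (by linarith)
  refine ⟨hprob, ?_⟩
  -- second inequality
  have hklog : (k : ℝ) * Real.log n ≤ t := by
    have hnlek : (n : ℝ) ≤ (k : ℝ) ^ (m2 H) := by
      calc (n : ℝ) ≤ c * ((k : ℝ) / Real.log k) ^ m2 H := hnR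
        _ ≤ 1 * ((k : ℝ)) ^ m2 H := by
            refine mul_le_mul hc1 ?_ (by positivity) one_pos.le
            exact Real.rpow_le_rpow (by positivity) (div_le_self hkpos.le hlogk) hm2pos.le
        _ = (k : ℝ) ^ m2 H := one_mul _
    have hlogn : Real.log n ≤ m2 H * Real.log k := by
      calc Real.log n ≤ Real.log ((k : ℝ) ^ m2 H) := Real.log_le_log hnposR hnlek
        _ = m2 H * Real.log k := Real.log_rpow hkpos _
    calc (k : ℝ) * Real.log n ≤ (k : ℝ) * (m2 H * Real.log k) := by
          exact mul_le_mul_of_nonneg_left hlogn (by positivity)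
      _ ≤ (k : ℝ) * ((δ * C / 6) * Real.log k) := by
          refine mul_le_mul_of_nonneg_left ?_ (by positivity)
          exact mul_le_mul_of_nonneg_right hCm2 hlogpos.le
      _ = δ / 6 * (k:ℝ)^2 * p := by
          rw [hpdef]
          field_simp
      _ ≤ t := ht6
  have hrpow : ((n : ℝ)) ^ (-(k : ℝ)) = Real.exp (-((k : ℝ) * Real.log n)) := by
    rw [Real.rpow_def_of_pos hnposR]
    ring_nf
  rw [hrpow]
  exact Real.exp_le_exp.2 (by linarith)
end
end

section
/- Let H be a fixed graph with v_H ≥ 3 vertices and at least one edge, and let p = p(k) satisfy p = Θ((\log k)/k) as k → ∞. Let n = n(k) ≥ k, fix a k-element vertex subset K of G_{n,p}, and let 𝓗_K denote the collection of all copies of H in G_{n,p} that have at least one edge with both endpoints in K. Then for every δ > 0, setting t := ⌈(δ·\binom{k}{2}·p)^{1/v_H}⌉, one has Pr(|𝓗_K| ≥ δ·\binom{k}{2}·p) ≥ p^{\binom{v_H}{2}·t²}, and this lower bound is e^{−o(k)} as k → ∞; in particular, for every ε > 0 and all sufficiently large k, Pr(|𝓗_K| ≥ δ·\binom{k}{2}·p)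 ≥ e^{−εk}. -/
open Finset Filter
open scoped Classical

noncomputable section

/-! ### Auxiliary lemmas -/

lemma sum_powerset_prob {α : Type*} [DecidableEq α] (T : Finset α) (p : ℝ) :
    ∑ S ∈ T.powerset, p ^ S.card * (1 - p) ^ (T.card - S.card) = 1 := by
  have h := Finset.prod_add (fun _ : α => p) (fun _ : α => (1 - p)) T
  simp only [Finset.prod_const] at h
  rw [show p + (1 - p) = 1 by ring, one_pow] at h
  calc ∑ S ∈ T.powerset, p ^ S.card * (1 - p) ^ (T.card - S.card)
      = ∑ S ∈ T.powerset, p ^ S.card * (1 - p) ^ (T \ S).card := by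
        apply Finset.sum_congr rfl
        intro S hS
        rw [Finset.card_sdiff_of_subset (Finset.mem_powerset.mp hS)]
    _ = 1 := h.symm

lemma gnpProb_mono (n : ℕ) (p : ℝ) (hp0 : 0 ≤ p) (hp1 : p ≤ 1)
    {A B : Set (Finset (Sym2 (Fin n)))} (hAB : A ⊆ B) :
    gnpProb n p A ≤ gnpProb n p B := by
  apply Finset.sum_le_sum
  intro G _
  by_cases hGA : G ∈ A
  · rw [if_pos hGA, if_pos (hAB hGA)]
  · rw [if_neg hGA]
    split
    · exact mul_nonneg (pow_nonneg hp0 _) (pow_nonneg (by linarith) _)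
    · exact le_refl _

lemma gnpProb_superset_eq (n : ℕ) (p : ℝ) (E₀ : Finset (Sym2 (Fin n))) (hE : E₀ ⊆ allEdges n) :
    gnpProb n p {G | E₀ ⊆ G} = p ^ E₀.card := by
  classical
  set T := allEdges n with hT
  have h1 : gnpProb n p {G | E₀ ⊆ G}
      = ∑ G ∈ T.powerset.filter (fun G => E₀ ⊆ G), p ^ G.card * (1 - p) ^ (T.card - G.card) := by
    simp only [gnpProb, Finset.sum_filter, Set.mem_setOf_eq, hT]
  rw [h1]
  have h2 : ∑ G ∈ T.powerset.filter (fun G => E₀ ⊆ G), p ^ G.card * (1 - p) ^ (T.card - G.card)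
      = ∑ S ∈ (T \ E₀).powerset, p ^ (S ∪ E₀).card * (1 - p) ^ (T.card - (S ∪ E₀).card) := by
    apply Finset.sum_nbij' (i := fun G => G \ E₀) (j := fun S => S ∪ E₀)
    · intro G hG
      simp only [Finset.mem_filter, Finset.mem_powerset] at hG
      exact Finset.mem_powerset.mpr (Finset.sdiff_subset_sdiff hG.1 le_rfl)
    · intro S hS
      simp only [Finset.mem_powerset] at hS
      simp only [Finset.mem_filter, Finset.mem_powerset]
      refine ⟨Finset.union_subset (hS.trans Finset.sdiff_subset) hE, Finset.subset_union_right⟩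
    · intro G hG
      simp only [Finset.mem_filter, Finset.mem_powerset] at hG
      exact Finset.sdiff_union_of_subset hG.2
    · intro S hS
      simp only [Finset.mem_powerset] at hS
      exact Finset.union_sdiff_cancel_right (Finset.sdiff_disjoint.mono_left hS)
    · intro G hG
      simp only [Finset.mem_filter, Finset.mem_powerset] at hG
      rw [Finset.sdiff_union_of_subset hG.2]
  rw [h2]
  have hd : ∀ S ∈ (T \ E₀).powerset, (S ∪ E₀).card = S.card + E₀.card := by
    intro S hS
    simp only [Finset.mem_powerset] at hS
    exact Finset.card_union_of_disjoint (Finset.sdiff_disjoint.mono_left hS)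
  calc ∑ S ∈ (T \ E₀).powerset, p ^ (S ∪ E₀).card * (1 - p) ^ (T.card - (S ∪ E₀).card)
      = ∑ S ∈ (T \ E₀).powerset, p ^ E₀.card * (p ^ S.card * (1 - p) ^ ((T \ E₀).card - S.card)) := by
        apply Finset.sum_congr rfl
        intro S hS
        rw [hd S hS, pow_add]
        have hSle : S.card ≤ (T \ E₀).card := Finset.card_le_card (Finset.mem_powerset.mp hS)
        have hEle : E₀.card ≤ T.card := Finset.card_le_card hE
        have hTc : (T \ E₀).card = T.card - E₀.card := Finset.card_sdiff_of_subset hE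
        have : T.card - (S.card + E₀.card) = (T \ E₀).card - S.card := by omega
        rw [this]; ring
    _ = p ^ E₀.card := by rw [← Finset.mul_sum, sum_powerset_prob]; ring

/-- The `t`-blow-up of `H`. -/
def blowup {h : ℕ} (H : SimpleGraph (Fin h)) (t : ℕ) : SimpleGraph (Fin h × Fin t) :=
  SimpleGraph.comap Prod.fst H

lemma card_blowup_edges {h : ℕ} (H : SimpleGraph (Fin h)) (t : ℕ) :
    ((blowup H t).edgeFinset).card ≤ h.choose 2 * t ^ 2 := by
  classical
  have key : ((blowup H t).edgeFinset).card ≤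
      t ^ 2 * (((blowup H t).edgeFinset).image (Sym2.map Prod.fst)).card := by
    apply Finset.card_le_mul_card_image
    intro a ha
    rw [Finset.mem_image] at ha
    obtain ⟨e₀, _, rfl⟩ := ha
    induction e₀ using Sym2.ind with
    | _ z w =>
      rw [Sym2.map_pair_eq]
      have hsub : ((blowup H t).edgeFinset).filter
            (fun e => Sym2.map Prod.fst e = s(z.1, w.1)) ⊆
          (Finset.univ : Finset (Fin t × Fin t)).image
            (fun ab => s((z.1, ab.1), (w.1, ab.2))) := by
        intro e' he'
        rw [Finset.mem_filter] at he'
        obtain ⟨-, he2⟩ := he'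
        induction e' using Sym2.ind with
        | _ x y =>
          rw [Sym2.map_pair_eq, Sym2.eq_iff] at he2
          rw [Finset.mem_image]
          rcases he2 with ⟨h1, h2⟩ | ⟨h1, h2⟩
          · exact ⟨(x.2, y.2), Finset.mem_univ _, by
              rw [show (z.1, x.2) = x from Prod.ext h1.symm rfl,
                show (w.1, y.2) = y from Prod.ext h2.symm rfl]⟩
          · exact ⟨(y.2, x.2), Finset.mem_univ _, by
              rw [show (z.1, y.2) = y from Prod.ext h2.symm rfl,
                show (w.1, x.2) = x from Prod.ext h1.symm rfl, Sym2.eq_swap]⟩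
      calc (((blowup H t).edgeFinset).filter
            (fun e => Sym2.map Prod.fst e = s(z.1, w.1))).card
          ≤ ((Finset.univ : Finset (Fin t × Fin t)).image
            (fun ab => s((z.1, ab.1), (w.1, ab.2)))).card := Finset.card_le_card hsub
        _ ≤ (Finset.univ : Finset (Fin t × Fin t)).card := Finset.card_image_le
        _ = t ^ 2 := by simp [sq]
  have him : (((blowup H t).edgeFinset).image (Sym2.map Prod.fst)).card ≤ h.choose 2 := by
    calc (((blowup H t).edgeFinset).image (Sym2.map Prod.fst)).card
        ≤ ((⊤ : SimpleGraph (Fin h)).edgeFinset).card := by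
          apply Finset.card_le_card
          intro a ha
          rw [Finset.mem_image] at ha
          obtain ⟨e₀, he₀, rfl⟩ := ha
          rw [SimpleGraph.mem_edgeFinset] at he₀ ⊢
          induction e₀ using Sym2.ind with
          | _ z w =>
            rw [SimpleGraph.mem_edgeSet] at he₀
            rw [Sym2.map_pair_eq, SimpleGraph.mem_edgeSet, SimpleGraph.top_adj]
            exact H.ne_of_adj he₀
      _ = h.choose 2 := by
          rw [SimpleGraph.card_edgeFinset_top_eq_card_choose_two, Fintype.card_fin]
  calc ((blowup H t).edgeFinset).card
      ≤ t ^ 2 * (((blowup H t).edgeFinset).image (Sym2.map Prod.fst)).card := key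
    _ ≤ t ^ 2 * h.choose 2 := Nat.mul_le_mul_left _ him
    _ = h.choose 2 * t ^ 2 := Nat.mul_comm _ _

lemma blowup_image_subset_allEdges {h n t : ℕ} (H : SimpleGraph (Fin h))
    (ι : Fin h × Fin t ↪ Fin n) :
    ((blowup H t).edgeFinset).image (Sym2.map ι) ⊆ allEdges n := by
  intro e he
  rw [Finset.mem_image] at he
  obtain ⟨e₀, he₀, rfl⟩ := he
  rw [SimpleGraph.mem_edgeFinset] at he₀
  rw [allEdges, Finset.mem_filter]
  refine ⟨Finset.mem_univ _, ?_⟩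
  induction e₀ using Sym2.ind with
  | _ z w =>
    rw [SimpleGraph.mem_edgeSet] at he₀
    rw [Sym2.map_pair_eq, Sym2.mk_isDiag_iff]
    intro hc
    exact (blowup H t).ne_of_adj he₀ (ι.injective hc)

lemma card_HKcol_ge {h n t : ℕ} (H : SimpleGraph (Fin h)) (he : H.edgeSet.Nonempty)
    (K : Finset (Fin n)) (ι : Fin h × Fin t ↪ Fin n) (hι : ∀ z, ι z ∈ K)
    (G : Finset (Sym2 (Fin n)))
    (hG : ((blowup H t).edgeFinset).image (Sym2.map ι) ⊆ G) :
    t ^ h ≤ (HKcol H G K).card := by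
  classical
  have hinj : ∀ f : Fin h → Fin t, Function.Injective (fun i => ι (i, f i)) := by
    intro f i j hij
    have := ι.injective hij
    exact ((Prod.mk.injEq _ _ _ _).mp this).1
  set φ : (Fin h → Fin t) → (Fin h ↪ Fin n) := fun f => ⟨fun i => ι (i, f i), hinj f⟩ with hφ
  set P : (Fin h → Fin t) → (Finset (Fin n) × Finset (Sym2 (Fin n))) :=
    fun f => (Finset.univ.image (φ f), H.edgeFinset.image (Sym2.map (φ f))) with hP
  have hmem : ∀ f, P f ∈ HKcol H G K := by
    intro f
    have hsub : H.edgeFinset.image (Sym2.map (φ f)) ⊆ G := by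
      intro e he'
      rw [Finset.mem_image] at he'
      obtain ⟨a, ha, rfl⟩ := he'
      apply hG
      rw [Finset.mem_image]
      refine ⟨Sym2.map (fun i => (i, f i)) a, ?_, ?_⟩
      · rw [SimpleGraph.mem_edgeFinset] at ha ⊢
        induction a using Sym2.ind with
        | _ u v =>
          rw [SimpleGraph.mem_edgeSet] at ha
          rw [Sym2.map_pair_eq, SimpleGraph.mem_edgeSet]
          exact ha
      · rw [Sym2.map_map]
        rfl
    rw [HKcol, Finset.mem_filter]
    constructor
    · rw [copies, Finset.mem_filter]
      refine ⟨Finset.mem_univ _, φ f, rfl, ?_, hsub⟩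
      rw [Finset.coe_image, SimpleGraph.coe_edgeFinset]
    · obtain ⟨e₀, he₀⟩ := he
      refine ⟨Sym2.map (φ f) e₀, ?_, ?_⟩
      · rw [Finset.mem_image]
        exact ⟨e₀, SimpleGraph.mem_edgeFinset.mpr he₀, rfl⟩
      · intro v hv
        rw [Sym2.mem_map] at hv
        obtain ⟨w, _, rfl⟩ := hv
        exact hι _
  have hPinj : Function.Injective P := by
    intro f g hfg
    have h1 : Finset.univ.image (φ f) = Finset.univ.image (φ g) := congrArg Prod.fst hfg
    funext i
    have hmem2 : φ f i ∈ Finset.univ.image (φ g) := by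
      rw [← h1, Finset.mem_image]
      exact ⟨i, Finset.mem_univ _, rfl⟩
    rw [Finset.mem_image] at hmem2
    obtain ⟨j, _, hj⟩ := hmem2
    have := ι.injective hj
    obtain ⟨rfl, h3⟩ := (Prod.mk.injEq _ _ _ _).mp this
    exact h3.symm
  calc t ^ h = Fintype.card (Fin h → Fin t) := by simp
    _ ≤ (HKcol H G K).card := by
        rw [← Finset.card_univ]
        exact Finset.card_le_card_of_injOn P (fun f _ => hmem f) (hPinj.injOn)

open Asymptotics in
lemma master_littleO (a b C : ℝ) (ha : a < 1) :
    (fun x : ℝ => C * x ^ a * Real.log x ^ b) =o[atTop] (fun x : ℝ => x) := by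
  have h1 : (fun x : ℝ => Real.log x ^ b) =o[atTop] (fun x : ℝ => x ^ (1 - a)) :=
    isLittleO_log_rpow_rpow_atTop b (by linarith)
  have h2 : (fun x : ℝ => C * x ^ a) =O[atTop] (fun x : ℝ => x ^ a) :=
    (isBigO_refl (fun x : ℝ => x ^ a) atTop).const_mul_left C
  have h3 := h2.mul_isLittleO h1
  refine h3.trans_eventuallyEq ?_
  filter_upwards [eventually_gt_atTop (0:ℝ)] with x hx
  rw [← Real.rpow_add hx]
  norm_num

lemma master_nat (a b C : ℝ) (ha : a < 1) (ε' : ℝ) (hε' : 0 < ε') :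
    ∀ᶠ k : ℕ in atTop, C * (k:ℝ) ^ a * Real.log k ^ b ≤ ε' * k := by
  have h1 := (master_littleO a b C ha).comp_tendsto tendsto_natCast_atTop_atTop
  have h2 := h1.def hε'
  filter_upwards [h2] with k hk
  calc C * (k:ℝ) ^ a * Real.log k ^ b ≤ ‖C * (k:ℝ) ^ a * Real.log k ^ b‖ := le_abs_self _
    _ ≤ ε' * ‖(k:ℝ)‖ := hk
    _ = ε' * k := by rw [Real.norm_natCast]

set_option maxHeartbeats 1000000 in
/-- Lower bound on the upper tail of `|H_K|`: for `p = Θ(log k / k)`, a fixed `k`-set `K`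
and any `δ > 0`, with `t = ⌈(δ C(k,2) p)^{1/v_H}⌉` one has
`Pr(|H_K| ≥ δ C(k,2) p) ≥ p^{C(v_H,2) t²} ≥ e^{-ε k}` for all large `k`. -/
theorem HK_upper_tail_lower_bound {h : ℕ} (H : SimpleGraph (Fin h))
    (hv : 3 ≤ h) (he : H.edgeSet.Nonempty)
    (p : ℕ → ℝ) (c₁ c₂ : ℝ) (hc₁ : 0 < c₁) (hc₂ : 0 < c₂)
    (hp : ∀ᶠ k : ℕ in atTop,
      c₁ * Real.log k / k ≤ p k ∧ p k ≤ c₂ * Real.log k / k)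
    (n : ℕ → ℕ) (hn : ∀ k, k ≤ n k)
    (K : (k : ℕ) → Finset (Fin (n k))) (hK : ∀ k, (K k).card = k)
    (δ : ℝ) (hδ : 0 < δ) (ε : ℝ) (hε : 0 < ε) :
    ∀ᶠ k : ℕ in atTop,
      p k ^ (h.choose 2 * ⌈(δ * (k.choose 2 : ℝ) * p k) ^ ((1 : ℝ) / h)⌉₊ ^ 2) ≤
        gnpProb (n k) (p k) {G | δ * (k.choose 2 : ℝ) * p k ≤ ((HKcol H G (K k)).card : ℝ)} ∧
      Real.exp (-(ε * k)) ≤ gnpProb (n k) (p k) {G | δ * (k.choose 2 : ℝ) * p k ≤ ((HKcol H G (K k)).card : ℝ)} := by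
  classical
  have hh0 : 0 < h := by omega
  set CB : ℝ := δ * c₂ with hCB
  have hCB0 : 0 < CB := mul_pos hδ hc₂
  have evL : Tendsto (fun k : ℕ => Real.log k) atTop atTop :=
    Real.tendsto_log_atTop.comp tendsto_natCast_atTop_atTop
  filter_upwards [hp,
    eventually_ge_atTop 3,
    eventually_ge_atTop (2 * h),
    eventually_ge_atTop ⌈CB⁻¹⌉₊,
    master_nat 0 1 c₂ (by norm_num) 1 one_pos,
    master_nat (1/3) (1/3) ((h : ℝ) * CB ^ ((1:ℝ)/3)) (by norm_num) (1/2) (by norm_num),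
    master_nat (2/3) (5/3) (8 * (h.choose 2 : ℝ) * CB ^ ((2:ℝ)/3)) (by norm_num) ε hε,
    evL.eventually_ge_atTop (-Real.log c₁),
    evL.eventually_ge_atTop 1]
    with k hpk hk3 hk2h hkCB hF3 hE1 hE2 hF7 hL1
  obtain ⟨hplo, hphi⟩ := hpk
  have hk0 : (0:ℝ) < k := by
    have : (3:ℝ) ≤ k := by exact_mod_cast hk3
    linarith
  have hL0 : (0:ℝ) < Real.log k := by linarith
  have hppos : 0 < p k := lt_of_lt_of_le (by positivity) hplo
  have hp1 : p k ≤ 1 := by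
    rw [Real.rpow_zero, mul_one, Real.rpow_one, one_mul] at hF3
    calc p k ≤ c₂ * Real.log k / k := hphi
      _ ≤ 1 := by rw [div_le_one hk0]; linarith
  set x := δ * (k.choose 2 : ℝ) * p k with hxdef
  set t := ⌈x ^ ((1:ℝ)/(h:ℝ))⌉₊ with htdef
  have hchoose_pos : 0 < (k.choose 2 : ℝ) := by
    have : 0 < k.choose 2 := Nat.choose_pos (by omega)
    exact_mod_cast this
  have hx0 : 0 < x := mul_pos (mul_pos hδ hchoose_pos) hppos
  set y : ℝ := CB * (k * Real.log k) with hydef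
  have hy0 : 0 < y := by positivity
  have hkinv : CB⁻¹ ≤ (k:ℝ) := by
    calc CB⁻¹ ≤ (⌈CB⁻¹⌉₊ : ℝ) := Nat.le_ceil _
      _ ≤ k := by exact_mod_cast hkCB
  have hy1 : (1:ℝ) ≤ y := by
    have h1 : CB * CB⁻¹ = 1 := mul_inv_cancel₀ hCB0.ne'
    nlinarith [mul_le_mul_of_nonneg_left hkinv hCB0.le,
      mul_le_mul_of_nonneg_left hL1 (mul_pos hCB0 hk0).le]
  have hxy : x ≤ y := by
    have hc2 : (k.choose 2 : ℝ) ≤ (k:ℝ) * k := by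
      have hnat : k.choose 2 ≤ k * k := by
        calc k.choose 2 = k * (k-1) / 2 := Nat.choose_two_right k
          _ ≤ k * (k-1) := Nat.div_le_self _ _
          _ ≤ k * k := Nat.mul_le_mul_left _ (Nat.sub_le _ _)
      exact_mod_cast hnat
    have h1 : x ≤ δ * ((k:ℝ) * k) * (c₂ * Real.log k / k) := by
      apply mul_le_mul (mul_le_mul_of_nonneg_left hc2 hδ.le) hphi hppos.le (by positivity)
    calc x ≤ δ * ((k:ℝ) * k) * (c₂ * Real.log k / k) := h1
      _ = y := by field_simp [hydef, hCB]; ring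
  have hxr0 : 0 ≤ x ^ ((1:ℝ)/(h:ℝ)) := Real.rpow_nonneg hx0.le _
  have ht_le : (t:ℝ) ≤ y ^ ((1:ℝ)/3) + 1 := by
    have h1 : (t:ℝ) < x ^ ((1:ℝ)/(h:ℝ)) + 1 := Nat.ceil_lt_add_one hxr0
    have h2 : x ^ ((1:ℝ)/(h:ℝ)) ≤ y ^ ((1:ℝ)/(h:ℝ)) :=
      Real.rpow_le_rpow hx0.le hxy (by positivity)
    have h3 : y ^ ((1:ℝ)/(h:ℝ)) ≤ y ^ ((1:ℝ)/3) := by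
      apply Real.rpow_le_rpow_of_exponent_le hy1
      have hh3 : (3:ℝ) ≤ (h:ℝ) := by exact_mod_cast hv
      rw [div_le_div_iff₀ (by positivity) (by norm_num)]
      linarith
    linarith
  have hy13 : y ^ ((1:ℝ)/3) = CB ^ ((1:ℝ)/3) * ((k:ℝ) ^ ((1:ℝ)/3) * Real.log k ^ ((1:ℝ)/3)) := by
    rw [hydef, Real.mul_rpow hCB0.le (by positivity), Real.mul_rpow hk0.le hL0.le]
  have hth : (h:ℝ) * (y ^ ((1:ℝ)/3) + 1) ≤ k := by
    have h1 : (h:ℝ) * CB ^ ((1:ℝ)/3) * (k:ℝ) ^ ((1:ℝ)/3) * Real.log k ^ ((1:ℝ)/3)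
        ≤ 1/2 * k := hE1
    have h2 : (h:ℝ) ≤ 1/2 * k := by
      have : ((2*h : ℕ) : ℝ) ≤ k := by exact_mod_cast hk2h
      push_cast at this
      linarith
    have h3 : (h:ℝ) * y ^ ((1:ℝ)/3) = (h:ℝ) * CB ^ ((1:ℝ)/3) * (k:ℝ) ^ ((1:ℝ)/3) * Real.log k ^ ((1:ℝ)/3) := by
      rw [hy13]; ring
    have h4 : (h:ℝ) * (y ^ ((1:ℝ)/3) + 1) = (h:ℝ) * y ^ ((1:ℝ)/3) + h := by ring
    rw [h4, h3]
    linarith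
  have hth_nat : h * t ≤ k := by
    have hcast : ((h * t : ℕ) : ℝ) ≤ (k:ℝ) := by
      push_cast
      calc (h:ℝ) * t ≤ (h:ℝ) * (y ^ ((1:ℝ)/3) + 1) :=
            mul_le_mul_of_nonneg_left ht_le (by positivity)
        _ ≤ k := hth
    exact_mod_cast hcast
  -- the embedding of the blow-up into K
  have hcard : Fintype.card (Fin h × Fin t) ≤ Fintype.card ↥(K k) := by
    rw [Fintype.card_prod, Fintype.card_fin, Fintype.card_fin, Fintype.card_coe, hK k]
    exact hth_nat
  obtain ⟨emb⟩ := Function.Embedding.nonempty_of_card_le hcard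
  set ι : Fin h × Fin t ↪ Fin (n k) :=
    ⟨fun z => (emb z : Fin (n k)), fun a b hab => emb.injective (Subtype.ext hab)⟩ with hι'
  have hι : ∀ z, ι z ∈ K k := fun z => (emb z).2
  set E₀ : Finset (Sym2 (Fin (n k))) := ((blowup H t).edgeFinset).image (Sym2.map ι) with hE₀
  have hEsub : E₀ ⊆ allEdges (n k) := blowup_image_subset_allEdges H ι
  -- x ≤ t ^ h
  have hxth : x ≤ (t:ℝ) ^ h := by
    have heq : x = (x ^ ((1:ℝ)/(h:ℝ))) ^ h := by
      rw [← Real.rpow_natCast (x ^ ((1:ℝ)/(h:ℝ))) h, ← Real.rpow_mul hx0.le]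
      rw [one_div, inv_mul_cancel₀ (by exact_mod_cast hh0.ne'), Real.rpow_one]
    rw [heq]
    exact pow_le_pow_left₀ hxr0 (Nat.le_ceil _) h
  have hincl : {G : Finset (Sym2 (Fin (n k))) | E₀ ⊆ G} ⊆
      {G | x ≤ ((HKcol H G (K k)).card : ℝ)} := by
    intro G hG
    simp only [Set.mem_setOf_eq] at hG ⊢
    have hcount := card_HKcol_ge H he (K k) ι hι G hG
    calc x ≤ (t:ℝ) ^ h := hxth
      _ ≤ ((HKcol H G (K k)).card : ℝ) := by exact_mod_cast hcount
  have hprob : p k ^ (h.choose 2 * t ^ 2) ≤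
      gnpProb (n k) (p k) {G | x ≤ ((HKcol H G (K k)).card : ℝ)} := by
    calc p k ^ (h.choose 2 * t ^ 2)
        ≤ p k ^ E₀.card := by
          apply pow_le_pow_of_le_one hppos.le hp1
          exact le_trans Finset.card_image_le (card_blowup_edges H t)
      _ = gnpProb (n k) (p k) {G | E₀ ⊆ G} := (gnpProb_superset_eq _ _ _ hEsub).symm
      _ ≤ gnpProb (n k) (p k) {G | x ≤ ((HKcol H G (K k)).card : ℝ)} :=
          gnpProb_mono _ _ hppos.le hp1 hincl
  -- exp bound
  have hexp : Real.exp (-(ε * k)) ≤ p k ^ (h.choose 2 * t ^ 2) := by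
    have hm : p k ^ (h.choose 2 * t ^ 2)
        = Real.exp (((h.choose 2 * t ^ 2 : ℕ) : ℝ) * Real.log (p k)) := by
      rw [← Real.log_pow, Real.exp_log (pow_pos hppos _)]
    rw [hm, Real.exp_le_exp]
    have hlogp : -Real.log (p k) ≤ 2 * Real.log k := by
      have h1 : Real.log (c₁ * Real.log k / k) ≤ Real.log (p k) :=
        Real.log_le_log (by positivity) hplo
      rw [Real.log_div (by positivity) hk0.ne', Real.log_mul hc₁.ne' hL0.ne'] at h1
      have hLL : 0 ≤ Real.log (Real.log k) := Real.log_nonneg hL1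
      linarith
    have hm2 : ((h.choose 2 * t ^ 2 : ℕ) : ℝ) ≤ (h.choose 2 : ℝ) * (4 * y ^ ((2:ℝ)/3)) := by
      push_cast
      have ht2 : (t:ℝ) ^ 2 ≤ (y ^ ((1:ℝ)/3) + 1) ^ 2 :=
        pow_le_pow_left₀ (by positivity) ht_le 2
      have h1 : 1 ≤ y ^ ((1:ℝ)/3) := by
        have := Real.rpow_le_rpow_of_exponent_le hy1 (show (0:ℝ) ≤ 1/3 by norm_num)
        rwa [Real.rpow_zero] at this
      have h2 : (y ^ ((1:ℝ)/3)) ^ 2 = y ^ ((2:ℝ)/3) := by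
        rw [← Real.rpow_natCast (y ^ ((1:ℝ)/3)) 2, ← Real.rpow_mul hy0.le]
        norm_num
      have hyy : (y ^ ((1:ℝ)/3) + 1) ^ 2 ≤ 4 * y ^ ((2:ℝ)/3) := by nlinarith [h1, h2]
      have hcn : (0:ℝ) ≤ (h.choose 2 : ℝ) := by positivity
      nlinarith [mul_le_mul_of_nonneg_left (ht2.trans hyy) hcn]
    have hy23 : y ^ ((2:ℝ)/3) = CB ^ ((2:ℝ)/3) * ((k:ℝ) ^ ((2:ℝ)/3) * Real.log k ^ ((2:ℝ)/3)) := by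
      rw [hydef, Real.mul_rpow hCB0.le (by positivity), Real.mul_rpow hk0.le hL0.le]
    have hL53 : Real.log k ^ ((5:ℝ)/3) = Real.log k ^ ((2:ℝ)/3) * Real.log k := by
      rw [show (5:ℝ)/3 = 2/3 + 1 by norm_num, Real.rpow_add hL0, Real.rpow_one]
    have hfinal : ((h.choose 2 * t ^ 2 : ℕ) : ℝ) * (-Real.log (p k)) ≤ ε * k := by
      have hb : ((h.choose 2 * t ^ 2 : ℕ) : ℝ) * (-Real.log (p k))
          ≤ ((h.choose 2 : ℝ) * (4 * y ^ ((2:ℝ)/3))) * (2 * Real.log k) := by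
        apply mul_le_mul hm2 hlogp (neg_nonneg.mpr (Real.log_nonpos hppos.le hp1))
          (by positivity)
      have hre : ((h.choose 2 : ℝ) * (4 * y ^ ((2:ℝ)/3))) * (2 * Real.log k)
          = (8 * (h.choose 2 : ℝ) * CB ^ ((2:ℝ)/3)) * (k:ℝ) ^ ((2:ℝ)/3) * Real.log k ^ ((5:ℝ)/3) := by
        rw [hy23, hL53]; ring
      calc ((h.choose 2 * t ^ 2 : ℕ) : ℝ) * (-Real.log (p k))
          ≤ ((h.choose 2 : ℝ) * (4 * y ^ ((2:ℝ)/3))) * (2 * Real.log k) := hb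
        _ = (8 * (h.choose 2 : ℝ) * CB ^ ((2:ℝ)/3)) * (k:ℝ) ^ ((2:ℝ)/3) * Real.log k ^ ((5:ℝ)/3) := hre
        _ ≤ ε * k := hE2
    linarith [hfinal]
  exact ⟨hprob, le_trans hexp hprob⟩
end
end
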